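/- arXiv:1607.02817 — 4 statements merged into one kernel-verified Lean document; each statement's English description precedes it below -/
import Mathlib

section
/- The rate of an (n,k,r,4) sequential-recovery code over any field F_q satisfies k/n ≤ r²/(r²+2r+2). -/
open Finset

/-- Hamming weight of a vector. -/
def wt {ι : Type*} [Fintype ι] {F : Type*} [Field F] [DecidableEq F] (v : ι → F) : ℕ :=
  (Finset.univ.filter (fun i => v i ≠ 0)).card

/-- `C` is an `(n,k,r,t)_seq` code: for every set `E` of at most `t` erased coordinates
there is an ordering of `E` and dual codewords of weight `≤ r+1`, each containing the
current erased coordinate in its support and none of the later (still erased) ones. -/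
def SeqRecov {n : ℕ} {F : Type*} [Field F] [DecidableEq F]
    (C : Submodule F (Fin n → F)) (r t : ℕ) : Prop :=
  ∀ E : Finset (Fin n), E.card ≤ t →
    ∃ σ : List (Fin n), σ.Nodup ∧ σ.toFinset = E ∧
      ∀ j : Fin σ.length, ∃ h : Fin n → F,
        (∀ c ∈ C, ∑ i, h i * c i = 0) ∧ wt h ≤ r + 1 ∧ h (σ.get j) ≠ 0 ∧
        ∀ j' : Fin σ.length, (j : ℕ) < (j' : ℕ) → h (σ.get j') = 0

open Matrix Submodule


-- helpers for explicit span membership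
private lemma ms1 {F V : Type*} [Field F] [AddCommGroup V] [Module F V] {s : Set V} {u x : V}
    (hu : u ∈ s) {c : F} (hx : x = c • u) : x ∈ Submodule.span F s := by
  subst hx; exact smul_mem _ _ (subset_span hu)

private lemma ms2 {F V : Type*} [Field F] [AddCommGroup V] [Module F V] {s : Set V} {u w x : V}
    (hu : u ∈ s) (hw : w ∈ s) {c1 c2 : F} (hx : x = c1 • u + c2 • w) :
    x ∈ Submodule.span F s := by
  subst hx
  exact add_mem (smul_mem _ _ (subset_span hu)) (smul_mem _ _ (subset_span hw))

private lemma ms3 {F V : Type*} [Field F] [AddCommGroup V] [Module F V] {s : Set V} {u w z x : V}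
    (hu : u ∈ s) (hw : w ∈ s) (hz : z ∈ s) {c1 c2 c3 : F}
    (hx : x = c1 • u + c2 • w + c3 • z) : x ∈ Submodule.span F s := by
  subst hx
  exact add_mem (add_mem (smul_mem _ _ (subset_span hu)) (smul_mem _ _ (subset_span hw)))
    (smul_mem _ _ (subset_span hz))

private lemma mem_im {α β : Type*} [DecidableEq α] (v : α → β) (E : Finset α) (x y : α)
    (h1 : y ≠ x) (h2 : y ∈ E) : v y ∈ v '' ((E.erase x : Finset α) : Set α) :=
  ⟨y, Finset.mem_coe.2 (Finset.mem_erase.2 ⟨h1, h2⟩), rfl⟩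

private lemma cle2 {α : Type*} [DecidableEq α] (a b : α) : ({a, b} : Finset α).card ≤ 4 := by
  refine le_trans (Finset.card_insert_le _ _) ?_
  simp

private lemma cle3 {α : Type*} [DecidableEq α] (a b c : α) : ({a, b, c} : Finset α).card ≤ 4 := by
  refine le_trans (Finset.card_insert_le _ _) ?_
  refine le_trans (Nat.add_le_add_right (Finset.card_insert_le _ _) 1) ?_
  simp

private lemma cle4 {α : Type*} [DecidableEq α] (a b c d : α) :
    ({a, b, c, d} : Finset α).card ≤ 4 := by
  refine le_trans (Finset.card_insert_le _ _) ?_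
  refine le_trans (Nat.add_le_add_right (Finset.card_insert_le _ _) 1) ?_
  refine le_trans (Nat.add_le_add_right (Nat.add_le_add_right (Finset.card_insert_le _ _) 1) 1) ?_
  simp

set_option maxHeartbeats 2000000 in
theorem core {F : Type*} [Field F] [DecidableEq F] {ι : Type*} [Fintype ι] {n r : ℕ}
    (hr : 1 ≤ r) (v : Fin n → ι → F)
    (hwt : ∀ i : ι, (univ.filter (fun x => v x i ≠ 0)).card ≤ r + 1)
    (hfact : ∀ E : Finset (Fin n), E.Nonempty → E.card ≤ 4 →
      ∃ x ∈ E, v x ∉ Submodule.span F (v '' ((E.erase x : Finset (Fin n)) : Set (Fin n)))) :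
    (2 * r + 2) * n ≤ (r ^ 2 + 2 * r + 2) * Fintype.card ι := by
  classical
  rcases Nat.eq_zero_or_pos n with hn | hn
  · subst hn; simp
  set d := Fintype.card ι with hd
  -- column supports
  set col : Fin n → Finset ι := fun x => univ.filter (fun i => v x i ≠ 0) with hcol
  have colmem : ∀ x i, i ∈ col x ↔ v x i ≠ 0 := by intro x i; simp [hcol]
  have colnot : ∀ x i, i ∉ col x → v x i = 0 := by
    intro x i h; by_contra h'; exact h ((colmem x i).2 h')
  -- every column is nonzero
  have hne : ∀ x : Fin n, (col x).Nonempty := by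
    intro x
    obtain ⟨y, hy, hsp⟩ := hfact {x} ⟨x, mem_singleton_self x⟩ (by simp)
    rw [mem_singleton] at hy
    rw [hy] at hsp
    rcases Finset.eq_empty_or_nonempty (col x) with h | h
    · exfalso; apply hsp
      have hvx : v x = 0 := by
        funext i; exact colnot _ _ (by simp [h])
      rw [hvx]; exact zero_mem _
    · exact h
  choose ρ hρ using hne
  have vρ : ∀ x, v x (ρ x) ≠ 0 := fun x => (colmem _ _).1 (hρ x)
  -- N1 : weight-one columns
  set N1 : Finset (Fin n) := univ.filter (fun x => (col x).card = 1) with hN1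
  have memN1 : ∀ x, x ∈ N1 ↔ (col x).card = 1 := by intro x; simp [hN1]
  have colN1 : ∀ x ∈ N1, col x = {ρ x} := by
    intro x hx
    obtain ⟨a, ha⟩ := Finset.card_eq_one.mp ((memN1 x).1 hx)
    have h2 := hρ x
    rw [ha, mem_singleton] at h2
    rw [ha, h2]
  have vN1 : ∀ x ∈ N1, ∀ j, j ≠ ρ x → v x j = 0 := by
    intro x hx j hj
    apply colnot
    rw [colN1 x hx, mem_singleton]
    exact hj
  set R1 : Finset ι := N1.image ρ with hR1
  -- S1 : ρ is injective on N1
  have ρinj : ∀ x ∈ N1, ∀ y ∈ N1, ρ x = ρ y → x = y := by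
    have key : ∀ x ∈ N1, ∀ y ∈ N1, ρ x = ρ y → x ≠ y →
        v x ∈ Submodule.span F (v '' ((({x, y} : Finset (Fin n)).erase x : Finset (Fin n)) : Set (Fin n))) := by
      intro x hx y hy hxy hne'
      apply ms1 (mem_im v _ x y (Ne.symm hne') (by simp)) (c := v x (ρ x) * (v y (ρ y))⁻¹)
      funext j
      simp only [Pi.smul_apply, smul_eq_mul]
      by_cases hj : j = ρ x
      · subst hj
        rw [hxy]
        field_simp [vρ y]
      · rw [vN1 x hx j hj, vN1 y hy j (by rw [← hxy]; exact hj), mul_zero]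
    intro x hx y hy hxy
    by_contra hne'
    obtain ⟨z, hz, hsp⟩ := hfact {x, y} ⟨x, by simp⟩ (cle2 x y)
    simp only [mem_insert, mem_singleton] at hz
    rcases hz with rfl | rfl
    · exact hsp (key z hx y hy hxy hne')
    · rw [Finset.pair_comm x z] at hsp
      exact hsp (key z hy x hx hxy.symm (Ne.symm hne'))
  -- p and q
  set p : Fin n → ℕ := fun x => (col x ∩ R1).card with hp
  set q : Fin n → ℕ := fun x => (col x \ R1).card with hq
  have hpq : ∀ x, q x + p x = (col x).card := fun x => Finset.card_sdiff_add_card_inter _ _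
  -- N2
  set N2 : Finset (Fin n) := univ.filter (fun x => (col x).card = 2 ∧ p x = 1) with hN2
  have memN2 : ∀ x, x ∈ N2 ↔ (col x).card = 2 ∧ p x = 1 := by intro x; simp [hN2]
  have N2notN1 : ∀ x ∈ N2, x ∉ N1 := by
    intro x hx h1
    have := (memN2 x).1 hx
    have := (memN1 x).1 h1
    omega
  -- the two pivots for N2 columns
  have hπg : ∀ y, ∃ ag : ι × ι, y ∈ N2 → col y ∩ R1 = {ag.1} ∧ col y \ R1 = {ag.2} := by
    intro y
    by_cases hy : y ∈ N2
    · obtain ⟨hw2, hp1⟩ := (memN2 y).1 hy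
      obtain ⟨a, ha⟩ := Finset.card_eq_one.mp hp1
      have hq1 : q y = 1 := by have := hpq y; omega
      obtain ⟨g, hg⟩ := Finset.card_eq_one.mp hq1
      exact ⟨(a, g), fun _ => ⟨ha, hg⟩⟩
    · exact ⟨(ρ y, ρ y), fun h => absurd h hy⟩
  choose πg hπg2 using hπg
  set π : Fin n → ι := fun y => (πg y).1 with hπ
  set ρ2 : Fin n → ι := fun y => (πg y).2 with hρ2
  have hπR1 : ∀ y ∈ N2, π y ∈ R1 ∧ π y ∈ col y := by
    intro y hy
    have := (hπg2 y hy).1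
    have h1 : π y ∈ col y ∩ R1 := by rw [hπ]; rw [this]; exact mem_singleton_self _
    exact ⟨(mem_inter.1 h1).2, (mem_inter.1 h1).1⟩
  have hρ2R1 : ∀ y ∈ N2, ρ2 y ∉ R1 ∧ ρ2 y ∈ col y := by
    intro y hy
    have := (hπg2 y hy).2
    have h1 : ρ2 y ∈ col y \ R1 := by rw [hρ2]; rw [this]; exact mem_singleton_self _
    exact ⟨(mem_sdiff.1 h1).2, (mem_sdiff.1 h1).1⟩
  have colN2 : ∀ y ∈ N2, col y = {π y, ρ2 y} := by
    intro y hy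
    have hπy := hπR1 y hy
    have hρy := hρ2R1 y hy
    have hsub : {π y, ρ2 y} ⊆ col y := by
      intro j hj
      rcases mem_insert.1 hj with h | h
      · rw [h]; exact hπy.2
      · rw [mem_singleton.1 h]; exact hρy.2
    have hne' : π y ≠ ρ2 y := by
      intro h; exact hρy.1 (h ▸ hπy.1)
    apply (Finset.eq_of_subset_of_card_le hsub ?_).symm
    rw [Finset.card_insert_of_notMem (by simp [hne']), card_singleton,
      ((memN2 y).1 hy).1]
  have vN2 : ∀ y ∈ N2, ∀ j, j ≠ π y → j ≠ ρ2 y → v y j = 0 := by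
    intro y hy j h1 h2
    apply colnot
    rw [colN2 y hy]
    simp [h1, h2]
  -- S3 : ρ2 is injective on N2
  have ρ2inj : ∀ y ∈ N2, ∀ y' ∈ N2, ρ2 y = ρ2 y' → y = y' := by
    intro y hy y' hy' hgg
    by_contra hyy'
    obtain ⟨x, hxN1, hρx⟩ := Finset.mem_image.1 (hπR1 y hy).1
    obtain ⟨x', hx'N1, hρx'⟩ := Finset.mem_image.1 (hπR1 y' hy').1
    have hag : π y ≠ ρ2 y := fun h => (hρ2R1 y hy).1 (h ▸ (hπR1 y hy).1)
    have ha'g' : π y' ≠ ρ2 y' := fun h => (hρ2R1 y' hy').1 (h ▸ (hπR1 y' hy').1)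
    have ha'g : π y' ≠ ρ2 y := by rw [hgg]; exact ha'g'
    have hα : v y (π y) ≠ 0 := (colmem _ _).1 (hπR1 y hy).2
    have hβ : v y (ρ2 y) ≠ 0 := (colmem _ _).1 (hρ2R1 y hy).2
    have hα' : v y' (π y') ≠ 0 := (colmem _ _).1 (hπR1 y' hy').2
    have hβ' : v y' (ρ2 y) ≠ 0 := by rw [hgg]; exact (colmem _ _).1 (hρ2R1 y' hy').2
    have hvy : ∀ j, j ≠ π y → j ≠ ρ2 y → v y j = 0 := vN2 y hy
    have hvy' : ∀ j, j ≠ π y' → j ≠ ρ2 y → v y' j = 0 := by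
      intro j h1 h2; exact vN2 y' hy' j h1 (by rw [← hgg]; exact h2)
    have hvx : ∀ j, j ≠ π y → v x j = 0 := fun j hj => vN1 x hxN1 j (by rw [hρx]; exact hj)
    have hvx' : ∀ j, j ≠ π y' → v x' j = 0 := fun j hj => vN1 x' hx'N1 j (by rw [hρx']; exact hj)
    have hγ : v x (π y) ≠ 0 := by rw [← hρx]; exact vρ x
    have hγ' : v x' (π y') ≠ 0 := by rw [← hρx']; exact vρ x'
    have hxy : x ≠ y := fun h => N2notN1 y hy (h ▸ hxN1)
    have hxy' : x ≠ y' := fun h => N2notN1 y' hy' (h ▸ hxN1)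
    have hx'y : x' ≠ y := fun h => N2notN1 y hy (h ▸ hx'N1)
    have hx'y' : x' ≠ y' := fun h => N2notN1 y' hy' (h ▸ hx'N1)
    by_cases haa' : π y = π y'
    · -- the two N2 columns share their R1 pivot
      rw [← haa'] at hα' hvy' hvx' hγ'
      by_cases hdet : v y (π y) * v y' (ρ2 y) - v y (ρ2 y) * v y' (π y) = 0
      · -- y and y' are parallel : contradiction with the pair {y, y'}
        obtain ⟨z, hz, hsp⟩ := hfact {y, y'} ⟨y, by simp⟩ (cle2 _ _)
        simp only [mem_insert, mem_singleton] at hz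
        rcases hz with h | h
        · rw [h] at hsp; apply hsp
          refine ms1 (mem_im v _ y y' (Ne.symm hyy') (by simp))
            (c := v y (ρ2 y) * (v y' (ρ2 y))⁻¹) ?_
          funext j
          simp only [Pi.smul_apply, smul_eq_mul]
          by_cases hj1 : j = π y
          · subst hj1
            field_simp
            linear_combination hdet
          · by_cases hj2 : j = ρ2 y
            · subst hj2; field_simp
            · rw [hvy j hj1 hj2, hvy' j hj1 hj2, mul_zero]
        · rw [h] at hsp; apply hsp
          refine ms1 (mem_im v _ y' y hyy' (by simp))
            (c := v y' (ρ2 y) * (v y (ρ2 y))⁻¹) ?_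
          funext j
          simp only [Pi.smul_apply, smul_eq_mul]
          by_cases hj1 : j = π y
          · subst hj1
            field_simp
            linear_combination -hdet
          · by_cases hj2 : j = ρ2 y
            · subst hj2; field_simp
            · rw [hvy j hj1 hj2, hvy' j hj1 hj2, mul_zero]
      · -- y, y' not parallel : contradiction with the triple {y, y', x}
        obtain ⟨z, hz, hsp⟩ := hfact {y, y', x} ⟨y, by simp⟩ (cle3 _ _ _)
        simp only [mem_insert, mem_singleton] at hz
        rcases hz with h | h | h
        · rw [h] at hsp; apply hsp
          refine ms2 (mem_im v _ y y' (Ne.symm hyy') (by simp))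
            (mem_im v _ y x hxy (by simp))
            (c1 := v y (ρ2 y) * (v y' (ρ2 y))⁻¹)
            (c2 := (v y (π y) - v y (ρ2 y) * (v y' (ρ2 y))⁻¹ * v y' (π y)) * (v x (π y))⁻¹) ?_
          funext j
          simp only [Pi.add_apply, Pi.smul_apply, smul_eq_mul]
          by_cases hj1 : j = π y
          · subst hj1
            field_simp
            ring
          · by_cases hj2 : j = ρ2 y
            · subst hj2
              rw [hvx (ρ2 y) (Ne.symm hag)]
              field_simp
              ring
            · rw [hvy j hj1 hj2, hvy' j hj1 hj2, hvx j hj1]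
              ring
        · rw [h] at hsp; apply hsp
          refine ms2 (mem_im v _ y' y hyy' (by simp))
            (mem_im v _ y' x hxy' (by simp))
            (c1 := v y' (ρ2 y) * (v y (ρ2 y))⁻¹)
            (c2 := (v y' (π y) - v y' (ρ2 y) * (v y (ρ2 y))⁻¹ * v y (π y)) * (v x (π y))⁻¹) ?_
          funext j
          simp only [Pi.add_apply, Pi.smul_apply, smul_eq_mul]
          by_cases hj1 : j = π y
          · subst hj1
            field_simp
            ring
          · by_cases hj2 : j = ρ2 y
            · subst hj2
              rw [hvx (ρ2 y) (Ne.symm hag)]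
              field_simp
              ring
            · rw [hvy j hj1 hj2, hvy' j hj1 hj2, hvx j hj1]
              ring
        · rw [h] at hsp; apply hsp
          refine ms2 (mem_im v _ x y (Ne.symm hxy) (by simp))
            (mem_im v _ x y' (Ne.symm hxy') (by simp))
            (c1 := v x (π y) * v y' (ρ2 y) *
              (v y (π y) * v y' (ρ2 y) - v y (ρ2 y) * v y' (π y))⁻¹)
            (c2 := -(v x (π y) * v y (ρ2 y) *
              (v y (π y) * v y' (ρ2 y) - v y (ρ2 y) * v y' (π y))⁻¹)) ?_
          funext j
          simp only [Pi.add_apply, Pi.smul_apply, smul_eq_mul]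
          by_cases hj1 : j = π y
          · subst hj1
            have hdet' : v y' (ρ2 y) * v y (π y) - v y (ρ2 y) * v y' (π y) ≠ 0 := by intro hh; apply hdet; linear_combination hh
            field_simp
            ring
          · by_cases hj2 : j = ρ2 y
            · subst hj2
              rw [hvx (ρ2 y) (Ne.symm hag)]
              field_simp
              ring
            · rw [hvy j hj1 hj2, hvy' j hj1 hj2, hvx j hj1]
              ring
    · -- distinct R1 pivots : contradiction with the quadruple {y, y', x, x'}
      have hxx' : x ≠ x' := by
        intro h; apply haa'; rw [← hρx, ← hρx', h]
      obtain ⟨z, hz, hsp⟩ := hfact {y, y', x, x'} ⟨y, by simp⟩ (cle4 _ _ _ _)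
      simp only [mem_insert, mem_singleton] at hz
      rcases hz with h | h | h | h
      · rw [h] at hsp; apply hsp
        refine ms3 (mem_im v _ y y' (Ne.symm hyy') (by simp))
          (mem_im v _ y x hxy (by simp)) (mem_im v _ y x' hx'y (by simp))
          (c1 := v y (ρ2 y) * (v y' (ρ2 y))⁻¹)
          (c2 := v y (π y) * (v x (π y))⁻¹)
          (c3 := -(v y (ρ2 y) * (v y' (ρ2 y))⁻¹ * v y' (π y') * (v x' (π y'))⁻¹)) ?_
        funext j
        simp only [Pi.add_apply, Pi.smul_apply, smul_eq_mul]
        by_cases hj1 : j = π y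
        · subst hj1
          rw [hvy' (π y) (fun hh => haa' hh) hag, hvx' (π y) (fun hh => haa' hh)]
          field_simp
          ring
        · by_cases hj2 : j = π y'
          · subst hj2
            rw [hvy (π y') (Ne.symm haa') ha'g, hvx (π y') (Ne.symm haa')]
            field_simp
            ring
          · by_cases hj3 : j = ρ2 y
            · subst hj3
              rw [hvx (ρ2 y) (Ne.symm hag), hvx' (ρ2 y) (Ne.symm ha'g)]
              field_simp
              ring
            · rw [hvy j hj1 hj3, hvy' j hj2 hj3, hvx j hj1, hvx' j hj2]
              ring
      · rw [h] at hsp; apply hsp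
        refine ms3 (mem_im v _ y' y hyy' (by simp))
          (mem_im v _ y' x hxy' (by simp)) (mem_im v _ y' x' hx'y' (by simp))
          (c1 := v y' (ρ2 y) * (v y (ρ2 y))⁻¹)
          (c2 := -(v y' (ρ2 y) * (v y (ρ2 y))⁻¹ * v y (π y) * (v x (π y))⁻¹))
          (c3 := v y' (π y') * (v x' (π y'))⁻¹) ?_
        funext j
        simp only [Pi.add_apply, Pi.smul_apply, smul_eq_mul]
        by_cases hj1 : j = π y
        · subst hj1
          rw [hvy' (π y) (fun hh => haa' hh) hag, hvx' (π y) (fun hh => haa' hh)]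
          field_simp
          ring
        · by_cases hj2 : j = π y'
          · subst hj2
            rw [hvy (π y') (Ne.symm haa') ha'g, hvx (π y') (Ne.symm haa')]
            field_simp
            ring
          · by_cases hj3 : j = ρ2 y
            · subst hj3
              rw [hvx (ρ2 y) (Ne.symm hag), hvx' (ρ2 y) (Ne.symm ha'g)]
              field_simp
              ring
            · rw [hvy j hj1 hj3, hvy' j hj2 hj3, hvx j hj1, hvx' j hj2]
              ring
      · rw [h] at hsp; apply hsp
        refine ms3 (mem_im v _ x y (Ne.symm hxy) (by simp))
          (mem_im v _ x y' (Ne.symm hxy') (by simp)) (mem_im v _ x x' (Ne.symm hxx') (by simp))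
          (c1 := v x (π y) * (v y (π y))⁻¹)
          (c2 := -(v x (π y) * (v y (π y))⁻¹ * v y (ρ2 y) * (v y' (ρ2 y))⁻¹))
          (c3 := v x (π y) * (v y (π y))⁻¹ * v y (ρ2 y) * (v y' (ρ2 y))⁻¹ *
            v y' (π y') * (v x' (π y'))⁻¹) ?_
        funext j
        simp only [Pi.add_apply, Pi.smul_apply, smul_eq_mul]
        by_cases hj1 : j = π y
        · subst hj1
          rw [hvy' (π y) (fun hh => haa' hh) hag, hvx' (π y) (fun hh => haa' hh)]
          field_simp
          ring
        · by_cases hj2 : j = π y'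
          · subst hj2
            rw [hvy (π y') (Ne.symm haa') ha'g, hvx (π y') (Ne.symm haa')]
            field_simp
            ring
          · by_cases hj3 : j = ρ2 y
            · subst hj3
              rw [hvx (ρ2 y) (Ne.symm hag), hvx' (ρ2 y) (Ne.symm ha'g)]
              field_simp
              ring
            · rw [hvy j hj1 hj3, hvy' j hj2 hj3, hvx j hj1, hvx' j hj2]
              ring
      · rw [h] at hsp; apply hsp
        refine ms3 (mem_im v _ x' y (Ne.symm hx'y) (by simp))
          (mem_im v _ x' y' (Ne.symm hx'y') (by simp))
          (mem_im v _ x' x hxx' (by simp))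
          (c1 := -(v x' (π y') * (v y' (π y'))⁻¹ * v y' (ρ2 y) * (v y (ρ2 y))⁻¹))
          (c2 := v x' (π y') * (v y' (π y'))⁻¹)
          (c3 := v x' (π y') * (v y' (π y'))⁻¹ * v y' (ρ2 y) * (v y (ρ2 y))⁻¹ *
            v y (π y) * (v x (π y))⁻¹) ?_
        funext j
        simp only [Pi.add_apply, Pi.smul_apply, smul_eq_mul]
        by_cases hj1 : j = π y
        · subst hj1
          rw [hvy' (π y) (fun hh => haa' hh) hag, hvx' (π y) (fun hh => haa' hh)]
          field_simp
          ring
        · by_cases hj2 : j = π y'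
          · subst hj2
            rw [hvy (π y') (Ne.symm haa') ha'g, hvx (π y') (Ne.symm haa')]
            field_simp
            ring
          · by_cases hj3 : j = ρ2 y
            · subst hj3
              rw [hvx (ρ2 y) (Ne.symm hag), hvx' (ρ2 y) (Ne.symm ha'g)]
              field_simp
              ring
            · rw [hvy j hj1 hj3, hvy' j hj2 hj3, hvx j hj1, hvx' j hj2]
              ring
  -- S2 : columns fully supported in R1 and not in N1 have weight ≥ 4
  have S2 : ∀ x : Fin n, x ∉ N1 → col x ⊆ R1 → 4 ≤ (col x).card := by
    intro x hx hsub
    by_contra hlt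
    push_neg at hlt
    have h0 : (col x).card ≠ 0 := by
      have := Finset.card_pos.2 ⟨ρ x, hρ x⟩; omega
    have h1 : (col x).card ≠ 1 := fun h => hx ((memN1 x).2 h)
    have hcases : (col x).card = 2 ∨ (col x).card = 3 := by omega
    rcases hcases with h2 | h3
    · -- weight two, fully inside R1 : contradiction with a triple
      obtain ⟨a1, a2, ha12, hcolx⟩ := Finset.card_eq_two.mp h2
      have ha1c : a1 ∈ col x := by rw [hcolx]; simp
      have ha2c : a2 ∈ col x := by rw [hcolx]; simp
      obtain ⟨x1, hx1, hρ1⟩ := Finset.mem_image.1 (hsub ha1c)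
      obtain ⟨x2, hx2, hρ2'⟩ := Finset.mem_image.1 (hsub ha2c)
      have hva1 : v x a1 ≠ 0 := (colmem x a1).1 ha1c
      have hva2 : v x a2 ≠ 0 := (colmem x a2).1 ha2c
      have hvx0 : ∀ j, j ≠ a1 → j ≠ a2 → v x j = 0 := by
        intro j hj1 hj2; apply colnot; rw [hcolx]; simp [hj1, hj2]
      have hxx1 : x ≠ x1 := fun h => hx (h ▸ hx1)
      have hxx2 : x ≠ x2 := fun h => hx (h ▸ hx2)
      have hx12 : x1 ≠ x2 := by
        intro h; apply ha12; rw [← hρ1, ← hρ2', h]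
      -- generic : the `x` column lies in the span of the two weight-one columns
      have keyA : ∀ s : Set (ι → F), v x1 ∈ s → v x2 ∈ s → v x ∈ Submodule.span F s := by
        intro s hs1 hs2
        have hv1 : ∀ j, j ≠ a1 → v x1 j = 0 := fun j hj => vN1 x1 hx1 j (by rw [hρ1]; exact hj)
        have hv2 : ∀ j, j ≠ a2 → v x2 j = 0 := fun j hj => vN1 x2 hx2 j (by rw [hρ2']; exact hj)
        have hv1a : v x1 a1 ≠ 0 := by rw [← hρ1]; exact vρ x1
        have hv2a : v x2 a2 ≠ 0 := by rw [← hρ2']; exact vρ x2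
        refine ms2 hs1 hs2 (c1 := v x a1 * (v x1 a1)⁻¹) (c2 := v x a2 * (v x2 a2)⁻¹) ?_
        funext j
        simp only [Pi.add_apply, Pi.smul_apply, smul_eq_mul]
        by_cases hj1 : j = a1
        · subst hj1
          rw [hv2 j ha12]
          field_simp
          ring
        · by_cases hj2 : j = a2
          · subst hj2
            rw [hv1 j (Ne.symm ha12)]
            field_simp
            ring
          · rw [hvx0 j hj1 hj2, hv1 j hj1, hv2 j hj2]
            ring
      -- generic : a weight-one column lies in the span of `x`'s column and the other
      have keyB : ∀ (s : Set (ι → F)) (b1 b2 : ι) (y1 y2 : Fin n), col x = {b1, b2} →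
          b1 ≠ b2 → y1 ∈ N1 → y2 ∈ N1 → ρ y1 = b1 → ρ y2 = b2 →
          v x ∈ s → v y2 ∈ s → v y1 ∈ Submodule.span F s := by
        intro s b1 b2 y1 y2 hcolx' hb12 hy1 hy2 hρy1 hρy2 hsx hs2
        have hvb1 : v x b1 ≠ 0 := (colmem x b1).1 (by rw [hcolx']; simp)
        have hvb2 : v x b2 ≠ 0 := (colmem x b2).1 (by rw [hcolx']; simp)
        have hvx0' : ∀ j, j ≠ b1 → j ≠ b2 → v x j = 0 := by
          intro j hj1 hj2; apply colnot; rw [hcolx']; simp [hj1, hj2]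
        have hv1 : ∀ j, j ≠ b1 → v y1 j = 0 := fun j hj => vN1 y1 hy1 j (by rw [hρy1]; exact hj)
        have hv2 : ∀ j, j ≠ b2 → v y2 j = 0 := fun j hj => vN1 y2 hy2 j (by rw [hρy2]; exact hj)
        have hv1a : v y1 b1 ≠ 0 := by rw [← hρy1]; exact vρ y1
        have hv2a : v y2 b2 ≠ 0 := by rw [← hρy2]; exact vρ y2
        refine ms2 hsx hs2 (c1 := v y1 b1 * (v x b1)⁻¹)
          (c2 := -(v y1 b1 * (v x b1)⁻¹ * v x b2 * (v y2 b2)⁻¹)) ?_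
        funext j
        simp only [Pi.add_apply, Pi.smul_apply, smul_eq_mul]
        by_cases hj1 : j = b1
        · subst hj1
          rw [hv2 j hb12]
          field_simp
          ring
        · by_cases hj2 : j = b2
          · subst hj2
            rw [hv1 j (Ne.symm hb12)]
            field_simp
            ring
          · rw [hv1 j hj1, hvx0' j hj1 hj2, hv2 j hj2]
            ring
      obtain ⟨z, hz, hsp⟩ := hfact {x, x1, x2} ⟨x, by simp⟩ (cle3 _ _ _)
      simp only [mem_insert, mem_singleton] at hz
      rcases hz with rfl | rfl | rfl
      · exact hsp (keyA _ (mem_im v _ z x1 (Ne.symm hxx1) (by simp))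
          (mem_im v _ z x2 (Ne.symm hxx2) (by simp)))
      · exact hsp (keyB _ a1 a2 z x2 hcolx ha12 hx1 hx2 hρ1 hρ2'
          (mem_im v _ z x hxx1 (by simp)) (mem_im v _ z x2 (Ne.symm hx12) (by simp)))
      · exact hsp (keyB _ a2 a1 z x1 (by rw [hcolx, Finset.pair_comm]) (Ne.symm ha12)
          hx2 hx1 hρ2' hρ1
          (mem_im v _ z x hxx2 (by simp)) (mem_im v _ z x1 hx12 (by simp)))
    · -- weight three, fully inside R1 : contradiction with a quadruple
      obtain ⟨a1, a2, a3, ha12, ha13, ha23, hcolx⟩ := Finset.card_eq_three.mp h3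
      have ha1c : a1 ∈ col x := by rw [hcolx]; simp
      have ha2c : a2 ∈ col x := by rw [hcolx]; simp
      have ha3c : a3 ∈ col x := by rw [hcolx]; simp
      obtain ⟨x1, hx1, hρ1⟩ := Finset.mem_image.1 (hsub ha1c)
      obtain ⟨x2, hx2, hρ2'⟩ := Finset.mem_image.1 (hsub ha2c)
      obtain ⟨x3, hx3, hρ3⟩ := Finset.mem_image.1 (hsub ha3c)
      have hxx1 : x ≠ x1 := fun h => hx (h ▸ hx1)
      have hxx2 : x ≠ x2 := fun h => hx (h ▸ hx2)
      have hxx3 : x ≠ x3 := fun h => hx (h ▸ hx3)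
      have hx12 : x1 ≠ x2 := by intro h; apply ha12; rw [← hρ1, ← hρ2', h]
      have hx13 : x1 ≠ x3 := by intro h; apply ha13; rw [← hρ1, ← hρ3, h]
      have hx23 : x2 ≠ x3 := by intro h; apply ha23; rw [← hρ2', ← hρ3, h]
      have keyC : ∀ s : Set (ι → F), v x1 ∈ s → v x2 ∈ s → v x3 ∈ s →
          v x ∈ Submodule.span F s := by
        intro s hs1 hs2 hs3
        have hv1 : ∀ j, j ≠ a1 → v x1 j = 0 := fun j hj => vN1 x1 hx1 j (by rw [hρ1]; exact hj)
        have hv2 : ∀ j, j ≠ a2 → v x2 j = 0 := fun j hj => vN1 x2 hx2 j (by rw [hρ2']; exact hj)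
        have hv3 : ∀ j, j ≠ a3 → v x3 j = 0 := fun j hj => vN1 x3 hx3 j (by rw [hρ3]; exact hj)
        have hv1a : v x1 a1 ≠ 0 := by rw [← hρ1]; exact vρ x1
        have hv2a : v x2 a2 ≠ 0 := by rw [← hρ2']; exact vρ x2
        have hv3a : v x3 a3 ≠ 0 := by rw [← hρ3]; exact vρ x3
        have hvx0 : ∀ j, j ≠ a1 → j ≠ a2 → j ≠ a3 → v x j = 0 := by
          intro j hj1 hj2 hj3; apply colnot; rw [hcolx]; simp [hj1, hj2, hj3]
        refine ms3 hs1 hs2 hs3 (c1 := v x a1 * (v x1 a1)⁻¹) (c2 := v x a2 * (v x2 a2)⁻¹)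
          (c3 := v x a3 * (v x3 a3)⁻¹) ?_
        funext j
        simp only [Pi.add_apply, Pi.smul_apply, smul_eq_mul]
        by_cases hj1 : j = a1
        · subst hj1
          rw [hv2 j ha12, hv3 j ha13]
          field_simp
          ring
        · by_cases hj2 : j = a2
          · subst hj2
            rw [hv1 j (Ne.symm ha12), hv3 j ha23]
            field_simp
            ring
          · by_cases hj3 : j = a3
            · subst hj3
              rw [hv1 j (Ne.symm ha13), hv2 j (Ne.symm ha23)]
              field_simp
              ring
            · rw [hvx0 j hj1 hj2 hj3, hv1 j hj1, hv2 j hj2, hv3 j hj3]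
              ring
      have keyD : ∀ (s : Set (ι → F)) (b1 b2 b3 : ι) (y1 y2 y3 : Fin n),
          col x = {b1, b2, b3} → b1 ≠ b2 → b1 ≠ b3 → b2 ≠ b3 →
          y1 ∈ N1 → y2 ∈ N1 → y3 ∈ N1 → ρ y1 = b1 → ρ y2 = b2 → ρ y3 = b3 →
          v x ∈ s → v y2 ∈ s → v y3 ∈ s → v y1 ∈ Submodule.span F s := by
        intro s b1 b2 b3 y1 y2 y3 hcolx' hb12 hb13 hb23 hy1 hy2 hy3 hρy1 hρy2 hρy3 hsx hs2 hs3
        have hvb1 : v x b1 ≠ 0 := (colmem x b1).1 (by rw [hcolx']; simp)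
        have hvb2 : v x b2 ≠ 0 := (colmem x b2).1 (by rw [hcolx']; simp)
        have hvb3 : v x b3 ≠ 0 := (colmem x b3).1 (by rw [hcolx']; simp)
        have hvx0' : ∀ j, j ≠ b1 → j ≠ b2 → j ≠ b3 → v x j = 0 := by
          intro j hj1 hj2 hj3; apply colnot; rw [hcolx']; simp [hj1, hj2, hj3]
        have hv1 : ∀ j, j ≠ b1 → v y1 j = 0 := fun j hj => vN1 y1 hy1 j (by rw [hρy1]; exact hj)
        have hv2 : ∀ j, j ≠ b2 → v y2 j = 0 := fun j hj => vN1 y2 hy2 j (by rw [hρy2]; exact hj)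
        have hv3 : ∀ j, j ≠ b3 → v y3 j = 0 := fun j hj => vN1 y3 hy3 j (by rw [hρy3]; exact hj)
        have hv1a : v y1 b1 ≠ 0 := by rw [← hρy1]; exact vρ y1
        have hv2a : v y2 b2 ≠ 0 := by rw [← hρy2]; exact vρ y2
        have hv3a : v y3 b3 ≠ 0 := by rw [← hρy3]; exact vρ y3
        refine ms3 hsx hs2 hs3 (c1 := v y1 b1 * (v x b1)⁻¹)
          (c2 := -(v y1 b1 * (v x b1)⁻¹ * v x b2 * (v y2 b2)⁻¹))
          (c3 := -(v y1 b1 * (v x b1)⁻¹ * v x b3 * (v y3 b3)⁻¹)) ?_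
        funext j
        simp only [Pi.add_apply, Pi.smul_apply, smul_eq_mul]
        by_cases hj1 : j = b1
        · subst hj1
          rw [hv2 j hb12, hv3 j hb13]
          field_simp
          ring
        · by_cases hj2 : j = b2
          · subst hj2
            rw [hv1 j (Ne.symm hb12), hv3 j hb23]
            field_simp
            ring
          · by_cases hj3 : j = b3
            · subst hj3
              rw [hv1 j (Ne.symm hb13), hv2 j (Ne.symm hb23)]
              field_simp
              ring
            · rw [hv1 j hj1, hvx0' j hj1 hj2 hj3, hv2 j hj2, hv3 j hj3]
              ring
      obtain ⟨z, hz, hsp⟩ := hfact {x, x1, x2, x3} ⟨x, by simp⟩ (cle4 _ _ _ _)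
      simp only [mem_insert, mem_singleton] at hz
      rcases hz with rfl | rfl | rfl | rfl
      · exact hsp (keyC _ (mem_im v _ z x1 (Ne.symm hxx1) (by simp))
          (mem_im v _ z x2 (Ne.symm hxx2) (by simp))
          (mem_im v _ z x3 (Ne.symm hxx3) (by simp)))
      · exact hsp (keyD _ a1 a2 a3 z x2 x3 hcolx ha12 ha13 ha23 hx1 hx2 hx3 hρ1 hρ2' hρ3
          (mem_im v _ z x hxx1 (by simp)) (mem_im v _ z x2 (Ne.symm hx12) (by simp))
          (mem_im v _ z x3 (Ne.symm hx13) (by simp)))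
      · exact hsp (keyD _ a2 a1 a3 z x1 x3 (by rw [hcolx]; ext j; simp; tauto) (Ne.symm ha12)
          ha23 ha13 hx2 hx1 hx3 hρ2' hρ1 hρ3
          (mem_im v _ z x hxx2 (by simp)) (mem_im v _ z x1 hx12 (by simp))
          (mem_im v _ z x3 (Ne.symm hx23) (by simp)))
      · exact hsp (keyD _ a3 a1 a2 z x1 x2 (by rw [hcolx]; ext j; simp; tauto) (Ne.symm ha13)
          (Ne.symm ha23) ha12 hx3 hx1 hx2 hρ3 hρ1 hρ2'
          (mem_im v _ z x hxx3 (by simp)) (mem_im v _ z x1 hx13 (by simp))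
          (mem_im v _ z x2 hx23 (by simp)))
  -- the classes
  set K4 : Finset (Fin n) := univ.filter (fun x => x ∉ N1 ∧ x ∉ N2 ∧ q x = 0) with hK4
  set K2 : Finset (Fin n) := univ.filter (fun x => x ∉ N1 ∧ x ∉ N2 ∧ ¬(q x = 0) ∧ q x = 1) with hK2
  set K0 : Finset (Fin n) := univ.filter
    (fun x => x ∉ N1 ∧ x ∉ N2 ∧ ¬(q x = 0) ∧ ¬(q x = 1)) with hK0
  -- partition lemma
  have partition : ∀ f : Fin n → ℕ, ∑ x : Fin n, f x =
      ∑ x ∈ N1, f x + ∑ x ∈ N2, f x + ∑ x ∈ K4, f x + ∑ x ∈ K2, f x + ∑ x ∈ K0, f x := by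
    intro f
    have h1 := Finset.sum_filter_add_sum_filter_not univ (fun x => x ∈ N1) f
    have h2 := Finset.sum_filter_add_sum_filter_not (univ.filter (fun x => ¬ x ∈ N1))
      (fun x => x ∈ N2) f
    have h3 := Finset.sum_filter_add_sum_filter_not
      ((univ.filter (fun x => ¬ x ∈ N1)).filter (fun x => ¬ x ∈ N2)) (fun x => q x = 0) f
    have h4 := Finset.sum_filter_add_sum_filter_not
      (((univ.filter (fun x => ¬ x ∈ N1)).filter (fun x => ¬ x ∈ N2)).filter
        (fun x => ¬ q x = 0)) (fun x => q x = 1) f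
    have e1 : univ.filter (fun x => x ∈ N1) = N1 := by ext x; simp
    have e2 : (univ.filter (fun x => ¬ x ∈ N1)).filter (fun x => x ∈ N2) = N2 := by
      ext x
      simp only [Finset.mem_filter, mem_univ, true_and]
      exact ⟨fun h => h.2, fun h => ⟨N2notN1 x h, h⟩⟩
    have e3 : ((univ.filter (fun x => ¬ x ∈ N1)).filter (fun x => ¬ x ∈ N2)).filter
        (fun x => q x = 0) = K4 := by
      ext x; simp only [Finset.mem_filter, mem_univ, true_and, hK4]; tauto
    have e4 : (((univ.filter (fun x => ¬ x ∈ N1)).filter (fun x => ¬ x ∈ N2)).filter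
        (fun x => ¬ q x = 0)).filter (fun x => q x = 1) = K2 := by
      ext x; simp only [Finset.mem_filter, mem_univ, true_and, hK2]; tauto
    have e5 : (((univ.filter (fun x => ¬ x ∈ N1)).filter (fun x => ¬ x ∈ N2)).filter
        (fun x => ¬ q x = 0)).filter (fun x => ¬ q x = 1) = K0 := by
      ext x; simp only [Finset.mem_filter, mem_univ, true_and, hK0]; tauto
    rw [e1] at h1
    rw [e2] at h2
    rw [e3] at h3
    rw [e4, e5] at h4
    omega
  -- double counting
  have dcount : ∀ Rs : Finset ι, ∑ x : Fin n, (col x ∩ Rs).card =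
      ∑ a ∈ Rs, (univ.filter (fun x => v x a ≠ 0)).card := by
    intro Rs
    have h1 : ∀ x : Fin n, (col x ∩ Rs).card = ∑ a ∈ Rs, if v x a ≠ 0 then 1 else 0 := by
      intro x
      rw [← Finset.card_filter]
      congr 1
      ext a
      simp [colmem, and_comm]
    simp_rw [h1]
    rw [Finset.sum_comm]
    simp [Finset.card_filter]
  -- row-weight bound for sums over a row subset
  have rowbound : ∀ Rs : Finset ι,
      ∑ a ∈ Rs, (univ.filter (fun x => v x a ≠ 0)).card ≤ Rs.card * (r + 1) := by
    intro Rs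
    calc ∑ a ∈ Rs, (univ.filter (fun x => v x a ≠ 0)).card
        ≤ ∑ _a ∈ Rs, (r + 1) := Finset.sum_le_sum (fun a _ => hwt a)
      _ = Rs.card * (r + 1) := by rw [Finset.sum_const, smul_eq_mul]
  have hcardR1 : R1.card = N1.card :=
    Finset.card_image_of_injOn (fun x hx y hy h => ρinj x (Finset.mem_coe.1 hx) y (Finset.mem_coe.1 hy) h)
  have sump : ∑ x : Fin n, p x ≤ N1.card * (r + 1) := by
    calc ∑ x : Fin n, p x = ∑ a ∈ R1, (univ.filter (fun x => v x a ≠ 0)).card := dcount R1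
      _ ≤ R1.card * (r + 1) := rowbound R1
      _ = N1.card * (r + 1) := by rw [hcardR1]
  have sumq : ∑ x : Fin n, q x ≤ R1ᶜ.card * (r + 1) := by
    have h0 : ∀ x, q x = (col x ∩ R1ᶜ).card := by
      intro x; simp only [hq]; congr 1; ext a; simp
    calc ∑ x : Fin n, q x = ∑ x : Fin n, (col x ∩ R1ᶜ).card := by simp_rw [h0]
      _ = ∑ a ∈ R1ᶜ, (univ.filter (fun x => v x a ≠ 0)).card := dcount R1ᶜ
      _ ≤ R1ᶜ.card * (r + 1) := rowbound R1ᶜ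
  -- lower bound helper
  have hb : ∀ (S : Finset (Fin n)) (c : ℕ) (f : Fin n → ℕ), (∀ x ∈ S, c ≤ f x) →
      S.card * c ≤ ∑ x ∈ S, f x := by
    intro S c f hc
    calc S.card * c = ∑ _x ∈ S, c := by rw [Finset.sum_const, smul_eq_mul]
      _ ≤ ∑ x ∈ S, f x := Finset.sum_le_sum hc
  -- pointwise lower bounds for p
  have hpN1 : ∀ x ∈ N1, 1 ≤ p x := by
    intro x hx
    have hmem : ρ x ∈ col x ∩ R1 := mem_inter.2 ⟨hρ x, Finset.mem_image_of_mem ρ hx⟩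
    have := Finset.card_pos.2 ⟨ρ x, hmem⟩
    simp only [hp]
    exact this
  have hpN2 : ∀ x ∈ N2, 1 ≤ p x := by
    intro x hx
    have := ((memN2 x).1 hx).2
    omega
  have hpK4 : ∀ x ∈ K4, 4 ≤ p x := by
    intro x hx
    rw [hK4] at hx
    simp only [Finset.mem_filter, mem_univ, true_and] at hx
    obtain ⟨hn1, _hn2, hq0⟩ := hx
    have hsub : col x ⊆ R1 := by
      have : col x \ R1 = ∅ := Finset.card_eq_zero.1 hq0
      exact Finset.sdiff_eq_empty_iff_subset.1 this
    have h4 := S2 x hn1 hsub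
    have heq : col x ∩ R1 = col x := Finset.inter_eq_left.2 hsub
    rw [hp]
    simp only
    rw [heq]
    exact h4
  have hpK2 : ∀ x ∈ K2, 2 ≤ p x := by
    intro x hx
    rw [hK2] at hx
    simp only [Finset.mem_filter, mem_univ, true_and] at hx
    obtain ⟨hn1, hn2, _h, hq1⟩ := hx
    by_contra hlt
    push_neg at hlt
    have hpx := hpq x
    have hcases : p x = 0 ∨ p x = 1 := by omega
    rcases hcases with h0 | h1
    · exact hn1 ((memN1 x).2 (by omega))
    · exact hn2 ((memN2 x).2 ⟨by omega, h1⟩)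
  have lbp : N1.card * 1 + N2.card * 1 + K4.card * 4 + K2.card * 2 ≤ ∑ x : Fin n, p x := by
    rw [partition p]
    have c1 := hb N1 1 p hpN1
    have c2 := hb N2 1 p hpN2
    have c3 := hb K4 4 p hpK4
    have c4 := hb K2 2 p hpK2
    have c5 : 0 ≤ ∑ x ∈ K0, p x := Nat.zero_le _
    omega
  -- pointwise lower bounds for q
  have hqN2 : ∀ x ∈ N2, 1 ≤ q x := by
    intro x hx
    obtain ⟨h2, hp1⟩ := (memN2 x).1 hx
    have := hpq x
    omega
  have hqK2 : ∀ x ∈ K2, 1 ≤ q x := by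
    intro x hx
    rw [hK2] at hx
    simp only [Finset.mem_filter, mem_univ, true_and] at hx
    omega
  have hqK0 : ∀ x ∈ K0, 2 ≤ q x := by
    intro x hx
    rw [hK0] at hx
    simp only [Finset.mem_filter, mem_univ, true_and] at hx
    omega
  have lbq : N2.card * 1 + K2.card * 1 + K0.card * 2 ≤ ∑ x : Fin n, q x := by
    rw [partition q]
    have c2 := hb N2 1 q hqN2
    have c4 := hb K2 1 q hqK2
    have c5 := hb K0 2 q hqK0
    have c1 : 0 ≤ ∑ x ∈ N1, q x := Nat.zero_le _
    have c3 : 0 ≤ ∑ x ∈ K4, q x := Nat.zero_le _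
    omega
  -- B ≤ |R1ᶜ|
  have hBc : N2.card ≤ R1ᶜ.card := by
    have hsub : N2.image ρ2 ⊆ R1ᶜ := by
      intro a ha
      obtain ⟨y, hyN2, rfl⟩ := Finset.mem_image.1 ha
      exact Finset.mem_compl.2 (hρ2R1 y hyN2).1
    calc N2.card = (N2.image ρ2).card :=
          (Finset.card_image_of_injOn (fun x hx y' hy' h =>
            ρ2inj x (Finset.mem_coe.1 hx) y' (Finset.mem_coe.1 hy') h)).symm
      _ ≤ R1ᶜ.card := Finset.card_le_card hsub
  -- counting n
  have hn5 : n = N1.card + N2.card + K4.card + K2.card + K0.card := by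
    have := partition (fun _ => 1)
    simpa using this
  have hd2 : R1.card + R1ᶜ.card = d := by
    rw [Finset.card_add_card_compl]
  -- final arithmetic
  have f1 : N1.card + N2.card + 4 * K4.card + 2 * K2.card ≤ N1.card * (r + 1) := by
    have := le_trans lbp sump
    omega
  have f2 : N2.card + K2.card + 2 * K0.card ≤ R1ᶜ.card * (r + 1) := by
    have := le_trans lbq sumq
    omega
  have g1 : r * (N1.card + N2.card + 4 * K4.card + 2 * K2.card) ≤ r * (N1.card * (r + 1)) :=
    Nat.mul_le_mul_left r f1
  have g2 : (r + 1) * (N2.card + K2.card + 2 * K0.card) ≤ (r + 1) * (R1ᶜ.card * (r + 1)) :=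
    Nat.mul_le_mul_left (r + 1) f2
  have g4 : K4.card ≤ r * K4.card := Nat.le_mul_of_pos_left _ hr
  have g5 : K2.card ≤ r * K2.card := Nat.le_mul_of_pos_left _ hr
  have hAd : N1.card + R1ᶜ.card = d := by rw [← hcardR1]; exact hd2
  rw [hn5, ← hAd]
  nlinarith [g1, g2, g4, g5, hBc]

/-- The rate of an `(n,k,r,4)_seq` code over any field satisfies
`k/n ≤ r²/(r²+2r+2)`. -/
theorem rate_bound_four_erasures {n r : ℕ} {F : Type*} [Field F] [DecidableEq F]
    (hn : 0 < n) (hr : 1 ≤ r) (C : Submodule F (Fin n → F))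
    (hseq : SeqRecov C r 4) :
    (Module.finrank F C : ℚ) / (n : ℚ) ≤ (r : ℚ) ^ 2 / ((r : ℚ) ^ 2 + 2 * r + 2) := by
  classical
  -- the set of low-weight dual codewords
  set Bset : Set (Fin n → F) :=
    {h | (∀ c ∈ C, ∑ i, h i * c i = 0) ∧ wt h ≤ r + 1} with hBset
  obtain ⟨t, htsub, htspan, htind⟩ := exists_linearIndependent F Bset
  have htfin : t.Finite := htind.setFinite
  haveI : Fintype t := htfin.fintype
  set b : t → (Fin n → F) := Subtype.val with hb
  set v : Fin n → t → F := fun x i => b i x with hv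
  set d := Fintype.card t with hd
  -- every low-weight dual codeword is in the span of b
  have hspan : ∀ h ∈ Bset, h ∈ Submodule.span F (Set.range b) := by
    intro h hh
    rw [hb, Subtype.range_coe, htspan]
    exact Submodule.subset_span hh
  -- the column fact from sequential recovery
  have hfact : ∀ E : Finset (Fin n), E.Nonempty → E.card ≤ 4 →
      ∃ x ∈ E, v x ∉ Submodule.span F (v '' ((E.erase x : Finset (Fin n)) : Set (Fin n))) := by
    intro E hEne hE4
    obtain ⟨σ, hnd, htf, hrec⟩ := hseq E hE4
    have hlen : 0 < σ.length := by
      rcases σ with _ | ⟨a, σ⟩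
      · exfalso; rw [← htf] at hEne; simp at hEne
      · simp
    obtain ⟨h, hdual, hwth, hne0, hlater⟩ := hrec ⟨0, hlen⟩
    set x := σ.get ⟨0, hlen⟩ with hx
    have hxE : x ∈ E := by rw [← htf]; exact List.mem_toFinset.mpr (σ.get_mem ⟨0, hlen⟩)
    have hvanish : ∀ y ∈ E, y ≠ x → h y = 0 := by
      intro y hy hyx
      rw [← htf] at hy
      obtain ⟨j', hj'⟩ := List.mem_iff_get.mp (List.mem_toFinset.mp hy)
      have : (0 : ℕ) < (j' : ℕ) := by
        rcases Nat.eq_zero_or_pos (j' : ℕ) with h0 | h0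
        · exfalso; apply hyx; rw [← hj', hx]; congr 1; exact Fin.ext h0
        · exact h0
      rw [← hj']; exact hlater j' this
    refine ⟨x, hxE, ?_⟩
    intro hmem
    -- h is in the span of b
    have hhB : h ∈ Bset := ⟨hdual, hwth⟩
    obtain ⟨cf, hcf⟩ := (mem_span_range_iff_exists_fun F).mp (hspan h hhB)
    set φ : (t → F) →ₗ[F] F := ∑ i : t, cf i • (LinearMap.proj i) with hφ
    have hφapp : ∀ u : t → F, φ u = ∑ i : t, cf i * u i := by
      intro u
      simp [hφ, LinearMap.sum_apply, LinearMap.smul_apply, LinearMap.proj_apply, smul_eq_mul]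
    have hφv : ∀ y : Fin n, φ (v y) = h y := by
      intro y
      rw [hφapp, ← hcf]
      rw [Finset.sum_apply]
      simp [hv, hb, smul_eq_mul]
    have hker : Submodule.span F (v '' ((E.erase x : Finset (Fin n)) : Set (Fin n))) ≤ LinearMap.ker φ := by
      rw [Submodule.span_le]
      rintro _ ⟨y, hy, rfl⟩
      simp only [SetLike.mem_coe, LinearMap.mem_ker]
      rw [hφv]
      have hy' := Finset.mem_coe.mp hy
      exact hvanish y (Finset.mem_of_mem_erase hy') (Finset.ne_of_mem_erase hy')
    have : φ (v x) = 0 := hker hmem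
    rw [hφv] at this
    exact hne0 this
  -- the row-weight bound
  have hwtv : ∀ i : t, (univ.filter (fun x => v x i ≠ 0)).card ≤ r + 1 := by
    intro i
    have := (htsub i.2).2
    simpa [wt, hv, hb] using this
  have hcore := core hr v hwtv hfact
  -- linear algebra: finrank C + d ≤ n
  set M : Matrix t (Fin n) F := Matrix.of b with hM
  have hCker : C ≤ LinearMap.ker M.mulVecLin := by
    intro c hc
    simp only [LinearMap.mem_ker, Matrix.mulVecLin_apply]
    funext i
    simp only [Matrix.mulVec, dotProduct]
    exact (htsub i.2).1 c hc
  have hrankT : Mᵀ.rank = d := by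
    rw [Matrix.rank, Matrix.range_mulVecLin]
    have : Set.range Mᵀ.col = Set.range b := rfl
    rw [this, hb]
    rw [finrank_span_eq_card htind]
  have hrank : M.rank = d := by rw [← Matrix.rank_transpose, hrankT]
  have hdim : Module.finrank F C + d ≤ n := by
    have h1 : Module.finrank F C ≤ Module.finrank F (LinearMap.ker M.mulVecLin) :=
      Submodule.finrank_mono hCker
    have h2 := LinearMap.finrank_range_add_finrank_ker M.mulVecLin
    rw [Module.finrank_pi] at h2
    have h3 : Module.finrank F (LinearMap.range M.mulVecLin) = d := by
      rw [← hrank]; rfl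
    simp [Fintype.card_fin] at h2
    omega
  -- final arithmetic
  set k := Module.finrank F C with hk
  have hkd : (k : ℚ) + d ≤ n := by exact_mod_cast hdim
  have hcq : (2 * r + 2 : ℚ) * n ≤ ((r:ℚ) ^ 2 + 2 * r + 2) * d := by exact_mod_cast hcore
  have hden : (0:ℚ) < (r:ℚ)^2 + 2*r + 2 := by positivity
  have hnq : (0:ℚ) < n := by exact_mod_cast hn
  rw [div_le_div_iff₀ hnq hden]
  nlinarith [mul_le_mul_of_nonneg_right hkd (le_of_lt hden), hcq, hnq, hden]
end

section
/- Let C be an (n,k,r,4)_seq code, let B_0 be the span in C⊥ of all dual codewords of weight ≤ r+1, and let m = dim(B_0). Then 3n ≤ m·(3r/2 + 2 − (r−2)/(2(r+1))). -/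
open Finset

section CombAux
variable {R : Type*} [DecidableEq R] {n : ℕ}

lemma hallW (T : Fin n → Finset R)
    (hall : ∀ E : Finset (Fin n), E.card ≤ 4 → E.card ≤ (E.biUnion T).card)
    (E : Finset (Fin n)) (W : Finset R) (hE4 : E.card ≤ 4)
    (hsub : ∀ i ∈ E, T i ⊆ W) (hlt : W.card < E.card) : False := by
  have h1 := hall E hE4
  have h2 : E.biUnion T ⊆ W := Finset.biUnion_subset.mpr hsub
  have := Finset.card_le_card h2
  omega

lemma comb_bound (T : Fin n → Finset R) (V : Finset R) (r : ℕ) (hr : 1 ≤ r)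
    (hTV : ∀ i, T i ⊆ V)
    (hdeg : ∀ s ∈ V, (univ.filter (fun i => s ∈ T i)).card ≤ r + 1)
    (hall : ∀ E : Finset (Fin n), E.card ≤ 4 → E.card ≤ (E.biUnion T).card) :
    2 * n * (r + 1) ≤ V.card * ((r + 1) ^ 2 + 1) := by
  classical
  have hne : ∀ i, (T i).Nonempty := by
    intro i
    rw [← Finset.card_pos]
    have := hall {i} (by simp)
    simpa using this
  have huniq : ∀ i i' : Fin n, (T i).card = 1 → T i = T i' → i = i' := by
    intro i i' h1 he
    by_contra hne'
    refine hallW T hall {i, i'} (T i) ?_ ?_ ?_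
    · exact le_trans (Finset.card_insert_le _ _) (by simp)
    · intro j hj
      rcases Finset.mem_insert.mp hj with rfl | hj
      · exact subset_rfl
      · rw [Finset.mem_singleton.mp hj, ← he]
    · rw [Finset.card_insert_of_notMem (by simpa using hne'), Finset.card_singleton]
      omega
  set A : Finset R := V.filter (fun s => ∃ i, T i = {s}) with hA
  -- small columns are not contained in A
  have hnotsub : ∀ i : Fin n, 2 ≤ (T i).card → (T i).card ≤ 3 → ¬ (T i ⊆ A) := by
    intro i h2 h3 hsub
    have hsing : ∀ s ∈ T i, ∃ j, T j = {s} := by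
      intro s hs
      have := hsub hs
      rw [hA, Finset.mem_filter] at this
      exact this.2
    choose js hjs using hsing
    have hjsinj : ∀ s hs s' hs', js s hs = js s' hs' → s = s' := by
      intro s hs s' hs' hee
      have : ({s} : Finset R) = {s'} := by rw [← hjs s hs, ← hjs s' hs', hee]
      simpa using this
    have hjsnei : ∀ s hs, js s hs ≠ i := by
      intro s hs hcontra
      have h1 : (T (js s hs)).card = 1 := by rw [hjs s hs]; simp
      rw [hcontra] at h1
      omega
    set E : Finset (Fin n) := insert i ((T i).attach.image (fun s => js s.1 s.2)) with hE
    have hcardimg : ((T i).attach.image (fun s => js s.1 s.2)).card = (T i).card := by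
      rw [Finset.card_image_of_injective]
      · simp
      · intro a b hab
        exact Subtype.ext (hjsinj a.1 a.2 b.1 b.2 hab)
    have hEcard : E.card = (T i).card + 1 := by
      rw [hE, Finset.card_insert_of_notMem, hcardimg]
      simp only [Finset.mem_image]
      rintro ⟨s, _, hcontra⟩
      exact hjsnei s.1 s.2 hcontra
    refine hallW T hall E (T i) (by omega) ?_ (by omega)
    intro j hj
    rw [hE, Finset.mem_insert] at hj
    rcases hj with rfl | hj
    · exact subset_rfl
    · simp only [Finset.mem_image, Finset.mem_attach, true_and] at hj
      obtain ⟨s, hcontra⟩ := hj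
      rw [← hcontra, hjs s.1 s.2]
      simp [s.2]
  -- singleton column count per row of A
  have hA1 : ∀ s ∈ A, (univ.filter (fun i => s ∈ T i ∧ (T i).card = 1)).card = 1 := by
    intro s hs
    rw [hA, Finset.mem_filter] at hs
    obtain ⟨hsV, i0, hi0⟩ := hs
    rw [Finset.card_eq_one]
    refine ⟨i0, ?_⟩
    ext i
    simp only [Finset.mem_filter, Finset.mem_univ, true_and, Finset.mem_singleton]
    constructor
    · rintro ⟨hsi, hc1⟩
      have hTi : T i = {s} := by
        obtain ⟨a, ha⟩ := Finset.card_eq_one.mp hc1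
        rw [ha] at hsi ⊢
        rw [Finset.mem_singleton] at hsi
        rw [hsi]
      exact huniq i i0 (by rw [hTi]; simp) (by rw [hTi, hi0])
    · rintro rfl
      rw [hi0]
      simp
  -- degree decomposition
  have hdecomp : ∀ s ∈ A, (univ.filter (fun i => s ∈ T i)).card =
      1 + (univ.filter (fun i => s ∈ T i ∧ (T i).card = 2)).card
        + (univ.filter (fun i => s ∈ T i ∧ 3 ≤ (T i).card)).card := by
    intro s hs
    have hsplit : (univ.filter (fun i => s ∈ T i)) =
        (univ.filter (fun i => s ∈ T i ∧ (T i).card = 1)) ∪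
        ((univ.filter (fun i => s ∈ T i ∧ (T i).card = 2)) ∪
         (univ.filter (fun i => s ∈ T i ∧ 3 ≤ (T i).card))) := by
      ext i
      simp only [Finset.mem_filter, Finset.mem_univ, true_and, Finset.mem_union]
      constructor
      · intro hsi
        have h1 : 1 ≤ (T i).card := Finset.card_pos.mpr ⟨s, hsi⟩
        rcases Nat.lt_or_ge (T i).card 2 with h | h
        · exact Or.inl ⟨hsi, by omega⟩
        · rcases Nat.lt_or_ge (T i).card 3 with h' | h'
          · exact Or.inr (Or.inl ⟨hsi, by omega⟩)
          · exact Or.inr (Or.inr ⟨hsi, h'⟩)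
      · rintro (⟨h, _⟩ | ⟨h, _⟩ | ⟨h, _⟩) <;> exact h
    have hd1 : Disjoint (univ.filter (fun i => s ∈ T i ∧ (T i).card = 1))
        ((univ.filter (fun i => s ∈ T i ∧ (T i).card = 2)) ∪
         (univ.filter (fun i => s ∈ T i ∧ 3 ≤ (T i).card))) := by
      simp only [Finset.disjoint_left, Finset.mem_filter, Finset.mem_union, Finset.mem_univ,
        true_and]
      rintro i ⟨_, h1⟩ (⟨_, h2⟩ | ⟨_, h3⟩) <;> omega
    have hd2 : Disjoint (univ.filter (fun i => s ∈ T i ∧ (T i).card = 2))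
        (univ.filter (fun i => s ∈ T i ∧ 3 ≤ (T i).card)) := by
      simp only [Finset.disjoint_left, Finset.mem_filter, Finset.mem_univ, true_and]
      rintro i ⟨_, h2⟩ ⟨_, h3⟩
      omega
    rw [hsplit, Finset.card_union_of_disjoint hd1, Finset.card_union_of_disjoint hd2,
      hA1 s hs, Nat.add_assoc]
  set W2A : Finset (Fin n) := univ.filter (fun i => (T i).card = 2 ∧ (T i ∩ A).Nonempty)
    with hW2A
  have hshape : ∀ i ∈ W2A, ∃ s t, s ∈ A ∧ t ∉ A ∧ s ≠ t ∧ T i = {s, t} ∧ T i ∩ A = {s} ∧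
      T i \ A = {t} := by
    intro i hi
    rw [hW2A, Finset.mem_filter] at hi
    obtain ⟨-, hc2, hnein⟩ := hi
    have hle : (T i ∩ A).card ≤ 2 :=
      le_trans (Finset.card_le_card Finset.inter_subset_left) hc2.le
    have h1 : 1 ≤ (T i ∩ A).card := Finset.card_pos.mpr hnein
    have hint1 : (T i ∩ A).card = 1 := by
      rcases Nat.lt_or_ge (T i ∩ A).card 2 with h | h
      · omega
      · exfalso
        have heq : T i ∩ A = T i :=
          Finset.eq_of_subset_of_card_le Finset.inter_subset_left (by omega)
        exact hnotsub i (by omega) (by omega) (Finset.inter_eq_left.mp heq)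
    have hsd : (T i ∩ A).card + (T i \ A).card = (T i).card :=
      Finset.card_inter_add_card_sdiff _ _
    obtain ⟨s, hs⟩ := Finset.card_eq_one.mp hint1
    obtain ⟨t, ht⟩ := Finset.card_eq_one.mp (show (T i \ A).card = 1 by omega)
    have hsA : s ∈ A := by
      have : s ∈ T i ∩ A := by rw [hs]; simp
      exact (Finset.mem_inter.mp this).2
    have htA : t ∉ A := by
      have : t ∈ T i \ A := by rw [ht]; simp
      exact (Finset.mem_sdiff.mp this).2
    refine ⟨s, t, hsA, htA, fun hc => htA (hc ▸ hsA), ?_, hs, ht⟩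
    have hun := sdiff_union_inter (T i) A
    rw [hs, ht] at hun
    rw [← hun]
    ext x
    simp [or_comm]
  have hinj2 : ∀ i ∈ W2A, ∀ i' ∈ W2A, ∀ t, t ∈ T i \ A → t ∈ T i' \ A → i = i' := by
    intro i hi i' hi' t hti hti'
    by_contra hne'
    obtain ⟨s, t1, hsA, ht1A, hst1, hTi, hint, hsd⟩ := hshape i hi
    obtain ⟨s', t1', hsA', ht1A', hst1', hTi', hint', hsd'⟩ := hshape i' hi'
    have ht1 : t = t1 := by rw [hsd] at hti; simpa using hti
    have ht1' : t = t1' := by rw [hsd'] at hti'; simpa using hti'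
    subst ht1
    rw [hA, Finset.mem_filter] at hsA hsA'
    obtain ⟨hsV, j, hj⟩ := hsA
    obtain ⟨hsV', j', hj'⟩ := hsA'
    have hcj : (T j).card = 1 := by rw [hj]; simp
    have hcj' : (T j').card = 1 := by rw [hj']; simp
    have hc2 : (T i).card = 2 := (Finset.mem_filter.mp hi).2.1
    have hc2' : (T i').card = 2 := (Finset.mem_filter.mp hi').2.1
    have hji : j ≠ i := fun h => by rw [h] at hcj; omega
    have hji' : j ≠ i' := fun h => by rw [h] at hcj; omega
    have hj'i : j' ≠ i := fun h => by rw [h] at hcj'; omega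
    have hj'i' : j' ≠ i' := fun h => by rw [h] at hcj'; omega
    by_cases hss : s = s'
    · have hstcard : ({s, t} : Finset R).card ≤ 2 :=
        le_trans (Finset.card_insert_le _ _) (by simp)
      have hEcard : ({j, i, i'} : Finset (Fin n)).card = 3 := by
        rw [Finset.card_insert_of_notMem (by simp [hji, hji']),
          Finset.card_insert_of_notMem (by simp [hne']), Finset.card_singleton]
      refine hallW T hall {j, i, i'} {s, t} (by omega) ?_ (by omega)
      intro a ha
      simp only [Finset.mem_insert, Finset.mem_singleton] at ha
      rcases ha with rfl | rfl | rfl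
      · rw [hj]; intro x hx; simp at hx; simp [hx]
      · rw [hTi]
      · rw [hTi', ← hss, ← ht1']
    · have hjj' : j ≠ j' := by
        intro h
        apply hss
        have : ({s} : Finset R) = {s'} := by rw [← hj, ← hj', h]
        simpa using this
      have hWcard : ({s, s', t} : Finset R).card ≤ 3 := by
        refine le_trans (Finset.card_insert_le _ _) (Nat.succ_le_succ ?_)
        exact le_trans (Finset.card_insert_le _ _) (by simp)
      have hEcard : ({j, j', i, i'} : Finset (Fin n)).card = 4 := by
        rw [Finset.card_insert_of_notMem (by simp [hjj', hji, hji']),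
          Finset.card_insert_of_notMem (by simp [hj'i, hj'i']),
          Finset.card_insert_of_notMem (by simp [hne']), Finset.card_singleton]
      refine hallW T hall {j, j', i, i'} {s, s', t} (by omega) ?_ (by omega)
      intro a ha
      simp only [Finset.mem_insert, Finset.mem_singleton] at ha
      rcases ha with rfl | rfl | rfl | rfl
      · rw [hj]; intro x hx; simp at hx; simp [hx]
      · rw [hj']; intro x hx; simp at hx; simp [hx]
      · rw [hTi]; intro x hx; simp at hx
        rcases hx with rfl | rfl <;> simp
      · rw [hTi', ← ht1']; intro x hx; simp at hx
        rcases hx with rfl | rfl <;> simp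
  -- (a) sum of dd over A equals sum over weight-2 columns of their A-intersection
  have hsumd : ∑ s ∈ A, (univ.filter (fun i => s ∈ T i ∧ (T i).card = 2)).card
      = ∑ i ∈ univ.filter (fun i => (T i).card = 2), (T i ∩ A).card := by
    have e1 : ∀ s, (univ.filter (fun i => s ∈ T i ∧ (T i).card = 2)).card
        = ∑ i : Fin n, if (s ∈ T i ∧ (T i).card = 2) then 1 else 0 := by
      intro s; rw [Finset.card_filter]
    rw [Finset.sum_congr rfl (fun s _ => e1 s), Finset.sum_comm, Finset.sum_filter]
    refine Finset.sum_congr rfl (fun i _ => ?_)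
    by_cases hc : (T i).card = 2
    · simp only [hc, and_true, if_true]
      rw [← Finset.card_filter, Finset.filter_mem_eq_inter, Finset.inter_comm]
    · simp [hc]
  -- value of (a): equals W2A.card
  have hsumd2 : ∑ i ∈ univ.filter (fun i => (T i).card = 2), (T i ∩ A).card = W2A.card := by
    rw [← Finset.sum_filter_add_sum_filter_not (univ.filter (fun i => (T i).card = 2))
      (fun i => (T i ∩ A).Nonempty)]
    have h2 : ∑ i ∈ (univ.filter (fun i => (T i).card = 2)).filter
        (fun i => ¬ (T i ∩ A).Nonempty), (T i ∩ A).card = 0 := by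
      refine Finset.sum_eq_zero (fun i hi => ?_)
      rw [Finset.mem_filter] at hi
      rw [Finset.not_nonempty_iff_eq_empty.mp hi.2]
      simp
    have hfe : (univ.filter (fun i => (T i).card = 2)).filter (fun i => (T i ∩ A).Nonempty)
        = W2A := by
      rw [hW2A, Finset.filter_filter]
    have h1 : ∑ i ∈ (univ.filter (fun i => (T i).card = 2)).filter
        (fun i => (T i ∩ A).Nonempty), (T i ∩ A).card = W2A.card := by
      rw [hfe]
      rw [Finset.card_eq_sum_ones]
      refine Finset.sum_congr rfl (fun i hi => ?_)
      obtain ⟨s, t, _, _, _, _, hint, _⟩ := hshape i hi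
      rw [hint]
      simp
    rw [h1, h2]
    omega
  -- (b) heavy columns
  have hsume : ∑ s ∈ A, (univ.filter (fun i => s ∈ T i ∧ 3 ≤ (T i).card)).card
      = ∑ i ∈ univ.filter (fun i => 3 ≤ (T i).card), (T i ∩ A).card := by
    have e1 : ∀ s, (univ.filter (fun i => s ∈ T i ∧ 3 ≤ (T i).card)).card
        = ∑ i : Fin n, if (s ∈ T i ∧ 3 ≤ (T i).card) then 1 else 0 := by
      intro s; rw [Finset.card_filter]
    rw [Finset.sum_congr rfl (fun s _ => e1 s), Finset.sum_comm, Finset.sum_filter]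
    refine Finset.sum_congr rfl (fun i _ => ?_)
    by_cases hc : 3 ≤ (T i).card
    · simp only [hc, and_true, if_true]
      rw [← Finset.card_filter, Finset.filter_mem_eq_inter, Finset.inter_comm]
    · simp [hc]
  have hheavy : ∀ i : Fin n, 3 ≤ (T i).card →
      (T i ∩ A).card ≤ (r + 1) * ((T i).card - 2) := by
    intro i h3
    rcases Nat.eq_or_lt_of_le h3 with h3' | h4
    · have hle2 : (T i ∩ A).card ≤ 2 := by
        by_contra hq
        have hle : (T i ∩ A).card ≤ (T i).card := Finset.card_le_card Finset.inter_subset_left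
        have heq : T i ∩ A = T i :=
          Finset.eq_of_subset_of_card_le Finset.inter_subset_left (by omega)
        exact hnotsub i (by omega) (by omega) (Finset.inter_eq_left.mp heq)
      have : 2 ≤ (r + 1) * ((T i).card - 2) := by
        have : (T i).card - 2 = 1 := by omega
        rw [this]
        omega
      omega
    · have hle : (T i ∩ A).card ≤ (T i).card := Finset.card_le_card Finset.inter_subset_left
      have h2 : 2 * ((T i).card - 2) ≤ (r + 1) * ((T i).card - 2) :=
        Nat.mul_le_mul_right _ (by omega)
      have h5 : (T i).card ≤ 2 * ((T i).card - 2) := by omega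
      omega
  have hsume2 : ∑ s ∈ A, (univ.filter (fun i => s ∈ T i ∧ 3 ≤ (T i).card)).card
      ≤ (r + 1) * ∑ i : Fin n, ((T i).card - 2) := by
    rw [hsume]
    calc ∑ i ∈ univ.filter (fun i => 3 ≤ (T i).card), (T i ∩ A).card
        ≤ ∑ i ∈ univ.filter (fun i => 3 ≤ (T i).card), (r + 1) * ((T i).card - 2) :=
          Finset.sum_le_sum (fun i hi => hheavy i (Finset.mem_filter.mp hi).2)
      _ = (r + 1) * ∑ i ∈ univ.filter (fun i => 3 ≤ (T i).card), ((T i).card - 2) := by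
          rw [Finset.mul_sum]
      _ ≤ (r + 1) * ∑ i : Fin n, ((T i).card - 2) := by
          refine Nat.mul_le_mul_left _ ?_
          exact Finset.sum_le_sum_of_subset (Finset.filter_subset _ _)
  -- (c) injection: A.card + W2A.card ≤ V.card
  have hinjcard : A.card + W2A.card ≤ V.card := by
    have hAV : A ⊆ V := Finset.filter_subset _ _
    rcases Finset.eq_empty_or_nonempty W2A with hW | ⟨i0, hi0⟩
    · rw [hW]
      simpa using Finset.card_le_card hAV
    · obtain ⟨s0, t0, _, _, _, _, _, hsd0⟩ := hshape i0 hi0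
      have hmem' : ∀ i ∈ W2A, ((T i) \ A).Nonempty := by
        intro i hi
        obtain ⟨s, t, _, _, _, _, _, hsd⟩ := hshape i hi
        rw [hsd]
        exact ⟨t, Finset.mem_singleton_self t⟩
      set f : Fin n → R := fun i => if h : ((T i) \ A).Nonempty then h.choose else t0 with hf
      have hfmem : ∀ i ∈ W2A, f i ∈ (T i) \ A := by
        intro i hi
        have h := hmem' i hi
        rw [hf]
        simp only [dif_pos h]
        exact h.choose_spec
      have hmaps : ∀ i ∈ W2A, f i ∈ V \ A := by
        intro i hi
        have h := hfmem i hi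
        rw [Finset.mem_sdiff] at h ⊢
        exact ⟨hTV i h.1, h.2⟩
      have hinjOn : Set.InjOn f W2A := by
        intro i hi i' hi' hfe
        rw [Finset.mem_coe] at hi hi'
        refine hinj2 i hi i' hi' (f i) (hfmem i hi) ?_
        rw [hfe]
        exact hfmem i' hi'
      have h1 : W2A.card ≤ (V \ A).card := Finset.card_le_card_of_injOn f hmaps hinjOn
      have h2 : (V \ A).card = V.card - A.card := Finset.card_sdiff_of_subset hAV
      have h3 := Finset.card_le_card hAV
      omega
  -- (d) number of singleton columns ≤ A.card
  have hn1A : (univ.filter (fun i => (T i).card = 1)).card ≤ A.card := by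
    rcases Finset.eq_empty_or_nonempty (univ.filter (fun i : Fin n => (T i).card = 1))
      with h | ⟨i0, hi0⟩
    · simp [h]
    · obtain ⟨t0, ht0⟩ := hne i0
      set g : Fin n → R := fun i => if h : (T i).Nonempty then h.choose else t0 with hg
      have hgmem : ∀ i, (T i).Nonempty → g i ∈ T i := by
        intro i h
        rw [hg]
        simp only [dif_pos h]
        exact h.choose_spec
      have hgsingle : ∀ i ∈ univ.filter (fun i : Fin n => (T i).card = 1), T i = {g i} := by
        intro i hi
        have hc := (Finset.mem_filter.mp hi).2
        obtain ⟨a, ha⟩ := Finset.card_eq_one.mp hc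
        have hmm := hgmem i (by rw [ha]; exact ⟨a, Finset.mem_singleton_self a⟩)
        rw [ha] at hmm ⊢
        rw [Finset.mem_singleton] at hmm
        rw [hmm]
      refine Finset.card_le_card_of_injOn g ?_ ?_
      · intro i hi
        rw [hA, Finset.mem_coe, Finset.mem_filter]
        constructor
        · exact hTV i (by rw [hgsingle i hi]; exact Finset.mem_singleton_self _)
        · exact ⟨i, hgsingle i hi⟩
      · intro i hi i' hi' he
        rw [Finset.mem_coe] at hi hi'
        refine huniq i i' (Finset.mem_filter.mp hi).2 ?_
        rw [hgsingle i hi, hgsingle i' hi', he]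
  -- (e) global sums
  have hIdeg : ∑ s ∈ V, (univ.filter (fun i => s ∈ T i)).card = ∑ i : Fin n, (T i).card := by
    have e1 : ∀ s, (univ.filter (fun i => s ∈ T i)).card
        = ∑ i : Fin n, if s ∈ T i then 1 else 0 := by
      intro s; rw [Finset.card_filter]
    rw [Finset.sum_congr rfl (fun s _ => e1 s), Finset.sum_comm]
    refine Finset.sum_congr rfl (fun i _ => ?_)
    rw [← Finset.card_filter, Finset.filter_mem_eq_inter, Finset.inter_eq_right.mpr (hTV i)]
  have hIF : (∑ i : Fin n, (T i).card) + (∑ s ∈ V, (r + 1 - (univ.filter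
      (fun i => s ∈ T i)).card)) = V.card * (r + 1) := by
    rw [← hIdeg, ← Finset.sum_add_distrib]
    rw [Finset.sum_congr rfl (fun s hs => show (univ.filter (fun i => s ∈ T i)).card
      + (r + 1 - (univ.filter (fun i => s ∈ T i)).card) = r + 1 by
        have := hdeg s hs; omega)]
    rw [Finset.sum_const, smul_eq_mul]
  have hstep1 : (∑ i : Fin n, (T i).card) + (univ.filter (fun i => (T i).card = 1)).card
      = 2 * n + ∑ i : Fin n, ((T i).card - 2) := by
    have e1 : (univ.filter (fun i : Fin n => (T i).card = 1)).card
        = ∑ i : Fin n, if (T i).card = 1 then 1 else 0 := by rw [Finset.card_filter]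
    rw [e1, ← Finset.sum_add_distrib]
    have e2 : ∀ i : Fin n, (T i).card + (if (T i).card = 1 then 1 else 0)
        = 2 + ((T i).card - 2) := by
      intro i
      have h1 : 1 ≤ (T i).card := Finset.card_pos.mpr (hne i)
      by_cases hc : (T i).card = 1
      · simp [hc]
      · simp only [hc, if_false]
        omega
    rw [Finset.sum_congr rfl (fun i _ => e2 i), Finset.sum_add_distrib, Finset.sum_const,
      Finset.card_univ, Fintype.card_fin, smul_eq_mul, Nat.mul_comm]
  -- row sum over A
  have hrowsum : A.card * (r + 1) = A.card
      + (∑ s ∈ A, (univ.filter (fun i => s ∈ T i ∧ (T i).card = 2)).card)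
      + (∑ s ∈ A, (univ.filter (fun i => s ∈ T i ∧ 3 ≤ (T i).card)).card)
      + (∑ s ∈ A, (r + 1 - (univ.filter (fun i => s ∈ T i)).card)) := by
    have hAV : A ⊆ V := Finset.filter_subset _ _
    have e1 : ∀ s ∈ A, r + 1 = 1
        + (univ.filter (fun i => s ∈ T i ∧ (T i).card = 2)).card
        + (univ.filter (fun i => s ∈ T i ∧ 3 ≤ (T i).card)).card
        + (r + 1 - (univ.filter (fun i => s ∈ T i)).card) := by
      intro s hs
      have h1 := hdecomp s hs
      have h2 := hdeg s (hAV hs)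
      omega
    calc A.card * (r + 1) = ∑ s ∈ A, (r + 1) := by rw [Finset.sum_const, smul_eq_mul]
      _ = ∑ s ∈ A, (1 + (univ.filter (fun i => s ∈ T i ∧ (T i).card = 2)).card
          + (univ.filter (fun i => s ∈ T i ∧ 3 ≤ (T i).card)).card
          + (r + 1 - (univ.filter (fun i => s ∈ T i)).card)) :=
        Finset.sum_congr rfl e1
      _ = _ := by
        rw [Finset.sum_add_distrib, Finset.sum_add_distrib, Finset.sum_add_distrib]
        simp [Finset.sum_const, Nat.add_assoc]
  -- slack over A bounded by slack over V
  have hFbound : (∑ s ∈ A, (r + 1 - (univ.filter (fun i => s ∈ T i)).card))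
      ≤ (∑ s ∈ V, (r + 1 - (univ.filter (fun i => s ∈ T i)).card)) :=
    Finset.sum_le_sum_of_subset (Finset.filter_subset _ _)
  -- final assembly
  set X := ∑ i : Fin n, ((T i).card - 2) with hX
  set Ftot := ∑ s ∈ V, (r + 1 - (univ.filter (fun i => s ∈ T i)).card) with hFtot
  set N1 := (univ.filter (fun i : Fin n => (T i).card = 1)).card with hN1
  set I := ∑ i : Fin n, (T i).card with hI
  have hkey : A.card * (r + 1) ≤ V.card + (r + 1) * X + (r + 1) * Ftot := by
    have h1 : Ftot ≤ (r + 1) * Ftot := Nat.le_mul_of_pos_left _ (by omega)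
    have h2 : (∑ s ∈ A, (univ.filter (fun i => s ∈ T i ∧ (T i).card = 2)).card) = W2A.card :=
      hsumd.trans hsumd2
    linarith [hrowsum, h2, hsume2, hinjcard, hFbound, h1]
  have hkey2 : N1 * (r + 1) ≤ V.card + (r + 1) * X + (r + 1) * Ftot :=
    le_trans (Nat.mul_le_mul_right _ hn1A) hkey
  have e1 : 2 * n + X + Ftot = V.card * (r + 1) + N1 := by linarith [hstep1, hIF]
  have e2 : (2 * n + X + Ftot) * (r + 1) = (V.card * (r + 1) + N1) * (r + 1) := by rw [e1]
  ring_nf at e2 hkey2 ⊢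
  linarith [e2, hkey2]

end CombAux

lemma keyA {n r : ℕ} {F : Type*} [Field F] [DecidableEq F]
    (C : Submodule F (Fin n → F)) (hseq : SeqRecov C r 4)
    (E : Finset (Fin n)) (hE : E.card ≤ 4) (lam : Fin n → F)
    (hzero : ∀ h : Fin n → F, (∀ c ∈ C, ∑ i, h i * c i = 0) → wt h ≤ r + 1 →
      ∑ i ∈ E, lam i * h i = 0) :
    ∀ i ∈ E, lam i = 0 := by
  by_contra hq
  push_neg at hq
  obtain ⟨i0, hi0E, hi0⟩ := hq
  obtain ⟨σ, hnodup, htf, hrec⟩ := hseq E hE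
  have hi0σ : i0 ∈ σ := by rw [← List.mem_toFinset, htf]; exact hi0E
  obtain ⟨j0', hj0'⟩ := List.mem_iff_get.mp hi0σ
  have hPne : (univ.filter (fun j : Fin σ.length => lam (σ.get j) ≠ 0)).Nonempty := by
    refine ⟨j0', ?_⟩
    rw [Finset.mem_filter]
    exact ⟨Finset.mem_univ _, by rw [hj0']; exact hi0⟩
  set P := univ.filter (fun j : Fin σ.length => lam (σ.get j) ≠ 0) with hP
  set j0 := P.min' hPne with hj0
  have hj0P : j0 ∈ P := P.min'_mem hPne
  obtain ⟨h, hdual, hwt, hne0, hafter⟩ := hrec j0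
  have hsum := hzero h hdual hwt
  have hEsum : ∑ i ∈ E, lam i * h i = ∑ j : Fin σ.length, lam (σ.get j) * h (σ.get j) := by
    rw [← htf]
    refine (Finset.sum_bij (fun (j : Fin σ.length) _ => σ.get j) ?_ ?_ ?_ ?_).symm
    · intro j _
      rw [List.mem_toFinset]
      exact σ.get_mem _
    · intro j _ j' _ hee
      exact List.nodup_iff_injective_get.mp hnodup hee
    · intro i hi
      obtain ⟨j, hj⟩ := List.mem_iff_get.mp (List.mem_toFinset.mp hi)
      exact ⟨j, Finset.mem_univ _, hj⟩
    · intro j _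
      rfl
  rw [hEsum] at hsum
  have hsingle : ∑ j : Fin σ.length, lam (σ.get j) * h (σ.get j)
      = lam (σ.get j0) * h (σ.get j0) := by
    refine Finset.sum_eq_single j0 ?_ ?_
    · intro j _ hjne
      rcases lt_or_gt_of_ne hjne with hlt | hgt
      · have hnotP : j ∉ P := by
          intro hjP
          exact absurd (P.min'_le j hjP) (not_le.mpr hlt)
        rw [hP, Finset.mem_filter] at hnotP
        push_neg at hnotP
        rw [hnotP (Finset.mem_univ _), zero_mul]
      · rw [hafter j (by exact hgt), mul_zero]
    · intro hcon
      exact absurd (Finset.mem_univ j0) hcon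
  rw [hsingle] at hsum
  have hlam0 : lam (σ.get j0) ≠ 0 := by
    have := hj0P
    rw [hP, Finset.mem_filter] at this
    exact this.2
  exact (mul_ne_zero hlam0 hne0) hsum

/-- Let `C` be an `(n,k,r,4)_seq` code, `B₀` the span of all dual codewords of weight
`≤ r+1`, and `m = dim B₀`. Then `3n ≤ m(3r/2 + 2 - (r-2)/(2(r+1)))`. -/
theorem local_parity_dim_bound {n r : ℕ} {F : Type*} [Field F] [DecidableEq F]
    (hr : 1 ≤ r) (C : Submodule F (Fin n → F)) (hseq : SeqRecov C r 4)
    (B₀ : Submodule F (Fin n → F))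
    (hB₀ : B₀ = Submodule.span F {h : Fin n → F |
      (∀ c ∈ C, ∑ i, h i * c i = 0) ∧ wt h ≤ r + 1})
    (m : ℕ) (hm : m = Module.finrank F B₀) :
    3 * (n : ℚ) ≤ (m : ℚ) *
      (3 * (r : ℚ) / 2 + 2 - ((r : ℚ) - 2) / (2 * ((r : ℚ) + 1))) := by
  classical
  obtain ⟨b, hbS, hbspan, hbind⟩ := exists_linearIndependent F
    {h : Fin n → F | (∀ c ∈ C, ∑ i, h i * c i = 0) ∧ wt h ≤ r + 1}
  have hbfinite : b.Finite := Set.finite_coe_iff.mp hbind.finite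
  haveI : Fintype ↥b := hbfinite.fintype
  set V : Finset (Fin n → F) := b.toFinset with hV
  have hmV : m = V.card := by
    rw [hm, hB₀, ← hbspan, finrank_span_set_eq_card hbind]
  set T : Fin n → Finset (Fin n → F) := fun i => V.filter (fun h => h i ≠ 0) with hT
  have hTV : ∀ i, T i ⊆ V := fun i => Finset.filter_subset _ _
  have hdeg : ∀ s ∈ V, (univ.filter (fun i => s ∈ T i)).card ≤ r + 1 := by
    intro s hs
    have hsS := hbS (Set.mem_toFinset.mp hs)
    have he : (univ.filter (fun i => s ∈ T i)) = univ.filter (fun i => s i ≠ 0) := by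
      ext i
      simp only [Finset.mem_filter, Finset.mem_univ, true_and, hT]
      constructor
      · rintro ⟨-, h⟩; exact h
      · intro h; exact ⟨hs, h⟩
    rw [he]
    exact hsS.2
  -- key: columns over any ≤4 coordinates, restricted to U, linearly dependent if |U| small
  have hall4 : ∀ E : Finset (Fin n), E.card ≤ 4 →
      (∀ lam : Fin n → F, (∀ h : Fin n → F, (∀ c ∈ C, ∑ i, h i * c i = 0) → wt h ≤ r + 1 →
        ∑ i ∈ E, lam i * h i = 0) → ∀ i ∈ E, lam i = 0) →
      E.card ≤ (E.biUnion T).card := by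
    intro E hE4 hkey
    by_contra hlt
    push_neg at hlt
    set U := E.biUnion T with hU
    have hnotli : ¬ LinearIndependent F
        (fun (i : ↥E) => (fun (u : ↥U) => (u : Fin n → F) i.1)) := by
      intro hli
      have h1 := hli.fintype_card_le_finrank
      rw [Module.finrank_pi] at h1
      simp only [Fintype.card_coe] at h1
      omega
    obtain ⟨g, hgsum, i1, hi1⟩ := Fintype.not_linearIndependent_iff.mp hnotli
    set lam : Fin n → F := fun i => if hmem : i ∈ E then g ⟨i, hmem⟩ else 0 with hlam
    have hlamval : ∀ (i : ↥E), lam i.1 = g i := by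
      intro i
      rw [hlam]
      simp only [i.2, dif_pos]
    have hrow : ∀ x ∈ b, ∑ i ∈ E, lam i * x i = 0 := by
      intro x hx
      by_cases hxU : x ∈ U
      · have h2 := congrFun hgsum ⟨x, hxU⟩
        simp only [Finset.sum_apply, Pi.smul_apply, smul_eq_mul, Pi.zero_apply] at h2
        rw [← Finset.sum_attach E (fun i => lam i * x i)]
        rw [← h2]
        refine Finset.sum_congr rfl (fun i _ => ?_)
        rw [hlamval i]
      · refine Finset.sum_eq_zero (fun i hi => ?_)
        have hx0 : x i = 0 := by
          by_contra hxi
          refine hxU (Finset.mem_biUnion.mpr ⟨i, hi, ?_⟩)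
          rw [hT]
          simp only [Finset.mem_filter]
          exact ⟨Set.mem_toFinset.mpr hx, hxi⟩
        rw [hx0, mul_zero]
    set L : (Fin n → F) →ₗ[F] F := ∑ i ∈ E, lam i • (LinearMap.proj i) with hL
    have hLapply : ∀ x : Fin n → F, L x = ∑ i ∈ E, lam i * x i := by
      intro x
      rw [hL]
      simp [LinearMap.proj_apply]
    have hspanzero : ∀ x ∈ Submodule.span F b, ∑ i ∈ E, lam i * x i = 0 := by
      intro x hx
      have hker : Submodule.span F b ≤ LinearMap.ker L := by
        rw [Submodule.span_le]
        intro y hy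
        rw [SetLike.mem_coe, LinearMap.mem_ker, hLapply]
        exact hrow y hy
      have := hker hx
      rw [LinearMap.mem_ker, hLapply] at this
      exact this
    have hzero : ∀ h : Fin n → F, (∀ c ∈ C, ∑ i, h i * c i = 0) → wt h ≤ r + 1 →
        ∑ i ∈ E, lam i * h i = 0 := by
      intro h h1 h2
      exact hspanzero h (by rw [hbspan]; exact Submodule.subset_span ⟨h1, h2⟩)
    have hlam0 := hkey lam hzero i1.1 i1.2
    rw [hlamval i1] at hlam0
    exact hi1 hlam0
  have hall : ∀ E : Finset (Fin n), E.card ≤ 4 → E.card ≤ (E.biUnion T).card :=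
    fun E hE4 => hall4 E hE4 (keyA C hseq E hE4)
  have hcomb := comb_bound T V r hr hTV hdeg hall
  rw [hmV]
  have hcast : (2 * (n : ℚ) * ((r : ℚ) + 1)) ≤ (V.card : ℚ) * (((r : ℚ) + 1) ^ 2 + 1) := by
    exact_mod_cast hcomb
  have hrpos : (0 : ℚ) < 2 * ((r : ℚ) + 1) := by positivity
  have hform : 3 * (r : ℚ) / 2 + 2 - ((r : ℚ) - 2) / (2 * ((r : ℚ) + 1))
      = 3 * ((((r : ℚ) + 1) ^ 2 + 1)) / (2 * ((r : ℚ) + 1)) := by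
    field_simp
    ring
  rw [hform, ← mul_div_assoc, le_div_iff₀ hrpos]
  ring_nf at hcast ⊢
  linarith
end

section
/- For every r ≥ 2 and suitable L (such that an r-regular bipartite graph on 2L vertices with girth ≥ 6 exists), Construction 1 yields a binary code of length Lr² + 2Lr + 2L and dimension Lr², hence of rate r²/(r²+2r+2), meeting the rate upper bound for (n,k,r,4)_seq codes with equality. -/
open Finset

/-- Vertex type of a bipartite graph with parts of size `L`. -/
abbrev BVert (L : ℕ) : Type := Fin L ⊕ Fin L

/-- Coordinates of the Construction-1 code: `r` copies of the edges of the graph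
(information symbols), `r` copies of the vertices (vertex parity symbols `n_l^{(i)}`),
and one cross-copy parity symbol `N_l` per vertex. -/
abbrev ConsCoord (L r : ℕ) (G : SimpleGraph (BVert L)) [DecidableRel G.Adj] : Type :=
  (Fin r × G.edgeSet) ⊕ (Fin r × BVert L) ⊕ BVert L

/-- Parity checks of the Construction-1 code: one per vertex symbol `n_v^{(i)}`
and one per cross-copy symbol `N_v`. -/
abbrev ConsCheck (L r : ℕ) : Type := (Fin r × BVert L) ⊕ BVert L

/-- Membership of a coordinate in the support of a parity check: the check of `n_v^{(i)}`
involves `n_v^{(i)}` together with the information symbols on the edges of copy `i`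
incident to `v`; the check of `N_v` involves `N_v` together with `n_v^{(1)},…,n_v^{(r)}`. -/
def inCheck (L r : ℕ) (G : SimpleGraph (BVert L)) [DecidableRel G.Adj] :
    ConsCheck L r → ConsCoord L r G → Bool
  | Sum.inl (i, v), Sum.inl (j, e) => decide (i = j) && decide (v ∈ (e : Sym2 (BVert L)))
  | Sum.inl (i, v), Sum.inr (Sum.inl (j, w)) => decide (i = j) && decide (v = w)
  | Sum.inl _, Sum.inr (Sum.inr _) => false
  | Sum.inr _, Sum.inl _ => false
  | Sum.inr v, Sum.inr (Sum.inl (_, w)) => decide (v = w)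
  | Sum.inr v, Sum.inr (Sum.inr w) => decide (v = w)

/-- The parity-check map of the Construction-1 code over `𝔽₂`. -/
noncomputable def parityMap (L r : ℕ) (G : SimpleGraph (BVert L)) [DecidableRel G.Adj] :
    ((ConsCoord L r G → ZMod 2) →ₗ[ZMod 2] (ConsCheck L r → ZMod 2)) :=
  LinearMap.pi fun c =>
    ∑ x ∈ Finset.univ.filter (fun x => inCheck L r G c x = true), LinearMap.proj x


lemma parityMap_apply (L r : ℕ) (G : SimpleGraph (BVert L)) [DecidableRel G.Adj]
    (w : ConsCoord L r G → ZMod 2) (c : ConsCheck L r) :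
    parityMap L r G w c = ∑ x : ConsCoord L r G, if inCheck L r G c x then w x else 0 := by
  simp only [parityMap, LinearMap.pi_apply, LinearMap.coe_sum, Finset.sum_apply,
    LinearMap.proj_apply, Finset.sum_filter,
    apply_ite (fun (f : (ConsCoord L r G → ZMod 2) →ₗ[ZMod 2] ZMod 2) => f w),
    LinearMap.zero_apply]

lemma parityMap_surj (L r : ℕ) (G : SimpleGraph (BVert L)) [DecidableRel G.Adj] :
    Function.Surjective (parityMap L r G) := by
  intro t
  refine ⟨Sum.elim (fun _ => 0) (Sum.elim (fun p => t (Sum.inl p))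
    (fun v => t (Sum.inr v) - ∑ j : Fin r, t (Sum.inl (j, v)))), ?_⟩
  funext c
  rw [parityMap_apply]
  rcases c with ⟨i, v⟩ | v
  · rw [Fintype.sum_sum_type]
    rcases v with a | a <;>
      simp [inCheck, Fintype.sum_sum_type, Fintype.sum_prod_type, ite_and,
        Sum.inl.injEq, Sum.inr.injEq, Finset.sum_ite_eq, Finset.sum_ite_eq']
  · rw [Fintype.sum_sum_type]
    simp only [inCheck, Sum.elim_inl, Sum.elim_inr, if_false, Finset.sum_const_zero,
      Bool.false_eq_true, decide_eq_true_eq]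
    rw [Fintype.sum_sum_type]
    simp [Fintype.sum_prod_type, Finset.sum_ite_eq', Finset.sum_comm]

lemma card_edgeSet {L r : ℕ} (G : SimpleGraph (BVert L)) [DecidableRel G.Adj]
    (hreg : ∀ v, G.degree v = r) : Fintype.card G.edgeSet = L * r := by
  have h := G.sum_degrees_eq_twice_card_edges
  simp only [hreg, Finset.sum_const, smul_eq_mul, Finset.card_univ] at h
  rw [← SimpleGraph.edgeFinset_card]
  have h2 : Fintype.card (BVert L) = 2 * L := by simp [Fintype.card_sum, two_mul]
  rw [h2, mul_assoc] at h
  omega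

/-- Construction 1, applied to an `r`-regular bipartite graph on `2L` vertices with girth
at least `6` (with `r ≥ 2`, `L ≥ 1`), yields a binary code of length `Lr² + 2Lr + 2L` and
dimension `Lr²`, hence of rate `r²/(r² + 2r + 2)`, meeting the rate bound for
`(n,k,r,4)_seq` codes with equality. -/
theorem construction_one_parameters {L r : ℕ} (hL : 1 ≤ L) (hr : 2 ≤ r)
    (G : SimpleGraph (BVert L)) [DecidableRel G.Adj]
    (hbip : ∀ a b : Fin L, ¬ G.Adj (Sum.inl a) (Sum.inl b) ∧
      ¬ G.Adj (Sum.inr a) (Sum.inr b))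
    (hreg : ∀ v, G.degree v = r)
    (hgirth : 6 ≤ G.girth) :
    Fintype.card (ConsCoord L r G) = L * r ^ 2 + 2 * L * r + 2 * L ∧
    Module.finrank (ZMod 2) (LinearMap.ker (parityMap L r G)) = L * r ^ 2 ∧
    (Module.finrank (ZMod 2) (LinearMap.ker (parityMap L r G)) : ℚ) /
        (Fintype.card (ConsCoord L r G) : ℚ) =
      (r : ℚ) ^ 2 / ((r : ℚ) ^ 2 + 2 * r + 2) := by
  have hB : Fintype.card (BVert L) = 2 * L := by simp [Fintype.card_sum, two_mul]
  have hE : Fintype.card G.edgeSet = L * r := card_edgeSet G hreg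
  have hcard : Fintype.card (ConsCoord L r G) = L * r ^ 2 + 2 * L * r + 2 * L := by
    simp only [Fintype.card_sum, Fintype.card_prod, hE, hB, Fintype.card_fin]
    ring
  have hcheck : Fintype.card (ConsCheck L r) = 2 * L * r + 2 * L := by
    simp only [Fintype.card_sum, Fintype.card_prod, hB, Fintype.card_fin]
    ring
  have hrange : LinearMap.range (parityMap L r G) = ⊤ :=
    LinearMap.range_eq_top.2 (parityMap_surj L r G)
  have hrn := LinearMap.finrank_range_add_finrank_ker (parityMap L r G)
  rw [hrange] at hrn
  have hdom : Module.finrank (ZMod 2) (ConsCoord L r G → ZMod 2) =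
      L * r ^ 2 + 2 * L * r + 2 * L := by
    rw [Module.finrank_pi, hcard]
  have htop : Module.finrank (ZMod 2) (⊤ : Submodule (ZMod 2) (ConsCheck L r → ZMod 2)) =
      2 * L * r + 2 * L := by
    rw [finrank_top, Module.finrank_pi, hcheck]
  rw [hdom, htop] at hrn
  have hker : Module.finrank (ZMod 2) (LinearMap.ker (parityMap L r G)) = L * r ^ 2 := by
    omega
  refine ⟨hcard, hker, ?_⟩
  rw [hker, hcard]
  have hL0 : (L : ℚ) ≠ 0 := by exact_mod_cast Nat.one_le_iff_ne_zero.mp hL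
  have hd : (r : ℚ) ^ 2 + 2 * r + 2 ≠ 0 := by positivity
  push_cast
  field_simp
end

section
/- Let H be an m×n matrix over F_q whose rows each have weight ≤ r+1. Suppose the weight-1 columns occupy s_1 distinct rows (one nonzero per row, rows 1..s_1 after permutation), and let B be the submatrix formed by rows s_1+1,...,m and the weight-2 columns having exactly one nonzero entry among the first s_1 rows. If the code ker(H°) (for the code whose dual contains the rows of H) permits recovery from all 4-erasure patterns sequentially, then every row of B has at most one nonzero entry. -/
open Finset

/-- The set of rows containing the nonzero entry of some weight-one column of `H`. -/
def rowsOfWtOneCols {m n : ℕ} {F : Type*} [Field F] [DecidableEq F]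
    (H : Matrix (Fin m) (Fin n) F) : Finset (Fin m) :=
  @Finset.filter _ (fun i => ∃ j, wt (fun i' => H i' j) = 1 ∧ H i j ≠ 0)
    (fun _ => Fintype.decidableExistsFintype) Finset.univ

/-- A column of the block `B`: a column of weight `2` having exactly one nonzero entry in
the rows carrying the weight-one columns. -/
def isBCol {m n : ℕ} {F : Type*} [Field F] [DecidableEq F]
    (H : Matrix (Fin m) (Fin n) F) (j : Fin n) : Prop :=
  wt (fun i => H i j) = 2 ∧
    (Finset.univ.filter (fun i => i ∈ rowsOfWtOneCols H ∧ H i j ≠ 0)).card = 1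

instance {m n : ℕ} {F : Type*} [Field F] [DecidableEq F]
    (H : Matrix (Fin m) (Fin n) F) (j : Fin n) : Decidable (isBCol H j) := by
  unfold isBCol; infer_instance

lemma wt_one_supp {ι : Type*} [Fintype ι] [DecidableEq ι] {F : Type*} [Field F]
    [DecidableEq F] (v : ι → F) (hw : wt v = 1) {a : ι} (ha : v a ≠ 0) :
    ∀ b, v b ≠ 0 → b = a := by
  obtain ⟨x, hx⟩ := Finset.card_eq_one.mp hw
  intro b hb
  have hbm : b ∈ Finset.univ.filter (fun i => v i ≠ 0) := by simp [hb]
  have ham : a ∈ Finset.univ.filter (fun i => v i ≠ 0) := by simp [ha]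
  rw [hx, Finset.mem_singleton] at hbm ham
  rw [hbm, ham]

lemma wt_two_supp {ι : Type*} [Fintype ι] [DecidableEq ι] {F : Type*} [Field F]
    [DecidableEq F] (v : ι → F) (hw : wt v = 2) {a b : ι} (hab : a ≠ b)
    (ha : v a ≠ 0) (hb : v b ≠ 0) :
    ∀ c, v c ≠ 0 → c = a ∨ c = b := by
  have hsub : ({a, b} : Finset ι) ⊆ Finset.univ.filter (fun i => v i ≠ 0) := by
    intro c hc
    simp only [Finset.mem_insert, Finset.mem_singleton] at hc
    rcases hc with h | h <;> subst h <;> simp [ha, hb]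
  have hcard : ({a, b} : Finset ι).card = 2 := Finset.card_pair hab
  have heq : ({a, b} : Finset ι) = Finset.univ.filter (fun i => v i ≠ 0) :=
    Finset.eq_of_subset_of_card_le hsub (by rw [hcard]; exact le_of_eq hw)
  intro c hc
  have : c ∈ ({a, b} : Finset ι) := by rw [heq]; simp [hc]
  simpa using this

/-- In the setting of the rate-bound proof for `(n,k,r,4)_seq` codes, each row of the
block `B` (rows outside those carrying the weight-one columns, columns of weight `2` with
exactly one nonzero entry in the weight-one rows) has at most one nonzero entry. -/
theorem B_rows_at_most_one_nonzero {n m r : ℕ} {F : Type*} [Field F] [DecidableEq F]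
    (hr : 1 ≤ r) (C : Submodule F (Fin n → F)) (hseq : SeqRecov C r 4)
    (H : Matrix (Fin m) (Fin n) F)
    (hind : LinearIndependent F (fun i => H i))
    (hdual : ∀ i, (∀ c ∈ C, ∑ j, H i j * c j = 0) ∧ wt (H i) ≤ r + 1)
    (hspan : ∀ h : Fin n → F, (∀ c ∈ C, ∑ j, h j * c j = 0) → wt h ≤ r + 1 →
      h ∈ Submodule.span F (Set.range fun i => H i)) :
    ∀ i : Fin m, i ∉ rowsOfWtOneCols H →
      (Finset.univ.filter (fun j => isBCol H j ∧ H i j ≠ 0)).card ≤ 1 := by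
  intro i hi
  by_contra hcard
  obtain ⟨j1, hj1, j2, hj2, hj12⟩ := Finset.one_lt_card.mp (not_le.mp hcard)
  obtain ⟨hB1, ha1⟩ := (Finset.mem_filter.mp hj1).2
  obtain ⟨hB2, ha2⟩ := (Finset.mem_filter.mp hj2).2
  -- the row in the weight-one block hit by j1 resp. j2
  obtain ⟨i1, hi1⟩ := Finset.card_eq_one.mp hB1.2
  obtain ⟨i2, hi2⟩ := Finset.card_eq_one.mp hB2.2
  have hi1m : i1 ∈ rowsOfWtOneCols H ∧ H i1 j1 ≠ 0 := by
    have : i1 ∈ Finset.univ.filter (fun i' => i' ∈ rowsOfWtOneCols H ∧ H i' j1 ≠ 0) := by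
      rw [hi1]; exact Finset.mem_singleton_self i1
    exact (Finset.mem_filter.mp this).2
  have hi2m : i2 ∈ rowsOfWtOneCols H ∧ H i2 j2 ≠ 0 := by
    have : i2 ∈ Finset.univ.filter (fun i' => i' ∈ rowsOfWtOneCols H ∧ H i' j2 ≠ 0) := by
      rw [hi2]; exact Finset.mem_singleton_self i2
    exact (Finset.mem_filter.mp this).2
  have hii1 : i ≠ i1 := fun h => hi (h ▸ hi1m.1)
  have hii2 : i ≠ i2 := fun h => hi (h ▸ hi2m.1)
  -- column supports of j1, j2
  have colsupp1 : ∀ i', H i' j1 ≠ 0 → i' = i ∨ i' = i1 :=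
    wt_two_supp (fun i' => H i' j1) hB1.1 hii1 ha1 hi1m.2
  have colsupp2 : ∀ i', H i' j2 ≠ 0 → i' = i ∨ i' = i2 :=
    wt_two_supp (fun i' => H i' j2) hB2.1 hii2 ha2 hi2m.2
  -- weight-one columns c1 at row i1, c2 at row i2
  obtain ⟨c1, hc1w, hc1ne⟩ := by
    have h := hi1m.1; unfold rowsOfWtOneCols at h
    exact ((@Finset.mem_filter _ _ (fun _ => Fintype.decidableExistsFintype) _ _).mp h).2
  obtain ⟨c2, hc2w, hc2ne⟩ := by
    have h := hi2m.1; unfold rowsOfWtOneCols at h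
    exact ((@Finset.mem_filter _ _ (fun _ => Fintype.decidableExistsFintype) _ _).mp h).2
  have csupp1 : ∀ i', H i' c1 ≠ 0 → i' = i1 := wt_one_supp _ hc1w hc1ne
  have csupp2 : ∀ i', H i' c2 ≠ 0 → i' = i2 := wt_one_supp _ hc2w hc2ne
  -- entries
  set a1 : F := H i j1 with ha1def
  set a2 : F := H i j2 with ha2def
  set b1 : F := H i1 j1 with hb1def
  set b2 : F := H i2 j2 with hb2def
  set d1 : F := H i1 c1 with hd1def
  set d2 : F := H i2 c2 with hd2def
  -- distinctness of columns
  have hwj1 : wt (fun i' => H i' j1) = 2 := hB1.1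
  have hwj2 : wt (fun i' => H i' j2) = 2 := hB2.1
  have hj1c1 : j1 ≠ c1 := by
    intro h; rw [h] at hwj1; rw [hwj1] at hc1w; exact absurd hc1w (by norm_num)
  have hj1c2 : j1 ≠ c2 := by
    intro h; rw [h] at hwj1; rw [hwj1] at hc2w; exact absurd hc2w (by norm_num)
  have hj2c1 : j2 ≠ c1 := by
    intro h; rw [h] at hwj2; rw [hwj2] at hc1w; exact absurd hc1w (by norm_num)
  have hj2c2 : j2 ≠ c2 := by
    intro h; rw [h] at hwj2; rw [hwj2] at hc2w; exact absurd hc2w (by norm_num)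
  -- the dependence coefficients
  set μ : Fin n → F := fun j =>
    (if j = j1 then a1⁻¹ else 0) - (if j = j2 then a2⁻¹ else 0)
      - (if j = c1 then b1 * (a1 * d1)⁻¹ else 0)
      + (if j = c2 then b2 * (a2 * d2)⁻¹ else 0) with hμdef
  have hμj1 : μ j1 = a1⁻¹ := by
    simp [hμdef, hj12, hj1c1, hj1c2]
  have hμ0 : ∀ j, j ≠ j1 → j ≠ j2 → j ≠ c1 → j ≠ c2 → μ j = 0 := by
    intro j h1 h2 h3 h4; simp [hμdef, h1, h2, h3, h4]
  -- the four columns are dependent: pairing μ with any row of H vanishes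
  have hrow : ∀ i', ∑ j, μ j * H i' j = 0 := by
    intro i'
    have hexp : ∑ j, μ j * H i' j =
        a1⁻¹ * H i' j1 - a2⁻¹ * H i' j2 - b1 * (a1 * d1)⁻¹ * H i' c1
          + b2 * (a2 * d2)⁻¹ * H i' c2 := by
      simp only [hμdef, sub_mul, add_mul, ite_mul, zero_mul,
        Finset.sum_add_distrib, Finset.sum_sub_distrib, Finset.sum_ite_eq',
        Finset.mem_univ, if_true]
    rw [hexp]
    by_cases h1 : i' = i
    · have e1 : H i' j1 = a1 := by rw [h1, ha1def]
      have e2 : H i' j2 = a2 := by rw [h1, ha2def]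
      have e3 : H i' c1 = 0 := by
        by_contra h; exact hii1 (h1.symm.trans (csupp1 i' h))
      have e4 : H i' c2 = 0 := by
        by_contra h; exact hii2 (h1.symm.trans (csupp2 i' h))
      rw [e1, e2, e3, e4]
      field_simp
      all_goals ring
    · by_cases h2 : i' = i1 <;> by_cases h3 : i' = i2
      · have e1 : H i' j1 = b1 := by rw [h2, hb1def]
        have e2 : H i' j2 = b2 := by rw [h3, hb2def]
        have e3 : H i' c1 = d1 := by rw [h2, hd1def]
        have e4 : H i' c2 = d2 := by rw [h3, hd2def]
        rw [e1, e2, e3, e4]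
        field_simp
        all_goals ring
      · have e1 : H i' j1 = b1 := by rw [h2, hb1def]
        have e3 : H i' c1 = d1 := by rw [h2, hd1def]
        have e2 : H i' j2 = 0 := by
          by_contra h; rcases colsupp2 i' h with h' | h'
          · exact h1 h'
          · exact h3 h'
        have e4 : H i' c2 = 0 := by by_contra h; exact h3 (csupp2 i' h)
        rw [e1, e2, e3, e4]
        field_simp
        all_goals ring
      · have e2 : H i' j2 = b2 := by rw [h3, hb2def]
        have e4 : H i' c2 = d2 := by rw [h3, hd2def]
        have e1 : H i' j1 = 0 := by
          by_contra h; rcases colsupp1 i' h with h' | h'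
          · exact h1 h'
          · exact h2 h'
        have e3 : H i' c1 = 0 := by by_contra h; exact h2 (csupp1 i' h)
        rw [e1, e2, e3, e4]
        field_simp
        all_goals ring
      · have e1 : H i' j1 = 0 := by
          by_contra h; rcases colsupp1 i' h with h' | h'
          · exact h1 h'
          · exact h2 h'
        have e2 : H i' j2 = 0 := by
          by_contra h; rcases colsupp2 i' h with h' | h'
          · exact h1 h'
          · exact h3 h'
        have e3 : H i' c1 = 0 := by by_contra h; exact h2 (csupp1 i' h)
        have e4 : H i' c2 = 0 := by by_contra h; exact h3 (csupp2 i' h)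
        rw [e1, e2, e3, e4]
        all_goals ring
  -- μ pairs to zero with everything in the row span of H
  have hsum0 : ∀ c : Fin m → F, ∑ j, μ j * (∑ i', c i' * H i' j) = 0 := by
    intro c
    calc ∑ j, μ j * (∑ i', c i' * H i' j)
        = ∑ j, ∑ i', c i' * (μ j * H i' j) := by
          refine Finset.sum_congr rfl fun j _ => ?_
          rw [Finset.mul_sum]
          exact Finset.sum_congr rfl fun i' _ => by ring
      _ = ∑ i', ∑ j, c i' * (μ j * H i' j) := Finset.sum_comm
      _ = ∑ i', c i' * ∑ j, μ j * H i' j := by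
          refine Finset.sum_congr rfl fun i' _ => ?_
          rw [Finset.mul_sum]
      _ = 0 := by simp [hrow]
  -- the erasure set
  set E : Finset (Fin n) := {j1, j2, c1, c2} with hEdef
  have hE4 : E.card ≤ 4 := by
    calc E.card ≤ ({j2, c1, c2} : Finset (Fin n)).card + 1 := Finset.card_insert_le _ _
      _ ≤ (({c1, c2} : Finset (Fin n)).card + 1) + 1 :=
          Nat.add_le_add_right (Finset.card_insert_le _ _) 1
      _ ≤ ((({c2} : Finset (Fin n)).card + 1) + 1) + 1 :=
          Nat.add_le_add_right (Nat.add_le_add_right (Finset.card_insert_le _ _) 1) 1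
      _ ≤ 4 := by simp
  have hμsupp : ∀ j, j ∉ E → μ j = 0 := by
    intro j hj
    simp only [hEdef, Finset.mem_insert, Finset.mem_singleton, not_or] at hj
    exact hμ0 j hj.1 hj.2.1 hj.2.2.1 hj.2.2.2
  obtain ⟨σ, hnd, hts, hrec⟩ := hseq E hE4
  -- inductively, every erased coordinate has μ-coefficient zero
  have key : ∀ k, ∀ hk : k < σ.length, μ (σ.get ⟨k, hk⟩) = 0 := by
    intro k
    induction k using Nat.strong_induction_on with
    | _ k IH =>
      intro hk
      obtain ⟨h, hdualh, hwth, hne, hlater⟩ := hrec ⟨k, hk⟩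
      obtain ⟨c, hc⟩ :=
        (Submodule.mem_span_range_iff_exists_fun (R := F)).mp (hspan h hdualh hwth)
      have hval : ∀ j, h j = ∑ i', c i' * H i' j := by
        intro j; rw [← hc]; simp
      have hz : ∑ j, μ j * h j = 0 := by
        calc ∑ j, μ j * h j = ∑ j, μ j * (∑ i', c i' * H i' j) :=
              Finset.sum_congr rfl fun j _ => by rw [hval]
          _ = 0 := hsum0 c
      have hzE : ∑ j ∈ E, μ j * h j = 0 := by
        rw [← hz]
        exact Finset.sum_subset (Finset.subset_univ E)
          (fun x _ hx => by rw [hμsupp x hx, zero_mul])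
      have hsingle : ∑ j ∈ E, μ j * h j = μ (σ.get ⟨k, hk⟩) * h (σ.get ⟨k, hk⟩) := by
        apply Finset.sum_eq_single_of_mem
        · rw [← hts]; exact List.mem_toFinset.mpr (σ.get_mem _)
        · intro j hjE hjne
          have hjσ : j ∈ σ := by rw [← hts] at hjE; exact List.mem_toFinset.mp hjE
          obtain ⟨k', hget⟩ := List.mem_iff_get.mp hjσ
          have hkne : (k' : ℕ) ≠ k := by
            intro hEq; apply hjne; rw [← hget]; congr 1; exact Fin.ext hEq
          rcases lt_or_gt_of_ne hkne with hlt | hgt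
          · have hμz : μ (σ.get k') = 0 := by
              have := IH k' hlt k'.isLt
              simpa using this
            rw [← hget, hμz, zero_mul]
          · rw [← hget, hlater k' hgt, mul_zero]
      rw [hsingle] at hzE
      exact (mul_eq_zero.mp hzE).resolve_right hne
  -- contradiction: μ j1 = a1⁻¹ ≠ 0
  have hj1σ : j1 ∈ σ := by
    rw [← List.mem_toFinset, hts, hEdef]; simp
  obtain ⟨k, hget⟩ := List.mem_iff_get.mp hj1σ
  have h0 : μ j1 = 0 := by
    rw [← hget]
    have := key k k.isLt
    simpa using this
  rw [hμj1] at h0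
  exact inv_ne_zero ha1 h0
end
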